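/- arXiv:1304.5633 — 4 statements merged into one kernel-verified Lean document; each statement's English description precedes it below -/
import Mathlib

section
/- A labeled graph G (possibly with multiple edges, no loops, edges labeled by positive integers representing call times) is a k-fault-tolerant gossip graph if and only if between every ordered pair of distinct vertices there exist at least k+1 pairwise edge-disjoint ascending paths. -/
/-- A labeled (multi)graph: `m` edges indexed by `Fin m`, each edge being an
unordered pair of vertices (a call), labeled by the time at which the call occurs. -/
structure LabeledGraph (V : Type) where
  m : ℕ
  ends : Fin m → Sym2 V
  label : Fin m → ℕ

namespace LabeledGraph

variable {V : Type}

lemma pos_right_of_fin {a b : ℕ} (e : Fin (a * b)) : 0 < b := by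
  rcases Nat.eq_zero_or_pos b with h | h
  · exact absurd e.isLt (by simp [h])
  · exact h

/-- The maximal label occurring in `G`. -/
def maxLabel (G : LabeledGraph V) : ℕ :=
  Finset.univ.sup fun e => G.label e

/-- `G.IsWalk u v es` : the list of edges `es` forms a walk from `u` to `v`. -/
inductive IsWalk (G : LabeledGraph V) : V → V → List (Fin G.m) → Prop
  | nil (v : V) : IsWalk G v v []
  | cons {u w v : V} {e : Fin G.m} {es : List (Fin G.m)} :
      G.ends e = s(u, w) → IsWalk G w v es → IsWalk G u v (e :: es)

/-- An ascending path from `u` to `v`: a walk whose labels strictly increase. -/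
def IsAscPath (G : LabeledGraph V) (u v : V) (es : List (Fin G.m)) : Prop :=
  G.IsWalk u v es ∧ List.Chain' (· < ·) (es.map G.label)

/-- Number of descents (non-increases) in a list of labels. -/
def descents : List ℕ → ℕ
  | a :: b :: rest => (if b ≤ a then 1 else 0) + descents (b :: rest)
  | _ => 0

/-- An `s`-folded ascending path from `u` to `v`: a walk using `s`-many “folds”,
i.e. a concatenation of `s+1` maximal ascending subpaths. -/
def IsFoldedPath (G : LabeledGraph V) (u v : V) (es : List (Fin G.m)) (s : ℕ) : Prop :=
  G.IsWalk u v es ∧ es.Nodup ∧ descents (es.map G.label) = s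

/-- `G` is a `k`-fault-tolerant gossip graph: after deleting any `≤ k` edges, every
ordered pair of vertices is still joined by an ascending path. -/
def IsFaultTolerant (G : LabeledGraph V) (k : ℕ) : Prop :=
  ∀ F : Finset (Fin G.m), F.card ≤ k →
    ∀ u v : V, ∃ es : List (Fin G.m), G.IsAscPath u v es ∧ ∀ e ∈ es, e ∉ F

/-- Edge sum of two labeled graphs: labels of `G₂` are shifted above those of `G₁`. -/
def edgeSum (G₁ G₂ : LabeledGraph V) : LabeledGraph V where
  m := G₁.m + G₂.m
  ends := fun e =>
    if hlt : e.val < G₁.m then G₁.ends ⟨e.val, hlt⟩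
    else G₂.ends ⟨e.val - G₁.m, by have := e.isLt; omega⟩
  label := fun e =>
    if hlt : e.val < G₁.m then G₁.label ⟨e.val, hlt⟩
    else G₂.label ⟨e.val - G₁.m, by have := e.isLt; omega⟩ + G₁.maxLabel

/-- Edge sum `hG` of `h` identical copies of `G`; the `i`-th copy has labels shifted
up by `i · maxLabel G`. -/
def hCopy (G : LabeledGraph V) (h : ℕ) : LabeledGraph V where
  m := h * G.m
  ends := fun e => G.ends ⟨e.val % G.m, Nat.mod_lt _ (pos_right_of_fin e)⟩
  label := fun e =>
    G.label ⟨e.val % G.m, Nat.mod_lt _ (pos_right_of_fin e)⟩ + (e.val / G.m) * G.maxLabel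

/-- The copy of an edge `e` of `G` in the `i`-th copy inside `hG`. -/
def copyEdge (G : LabeledGraph V) {h : ℕ} (i : Fin h) (e : Fin G.m) : Fin (G.hCopy h).m :=
  ⟨i.val * G.m + e.val, by
    show i.val * G.m + e.val < h * G.m
    calc i.val * G.m + e.val < (i.val + 1) * G.m := by rw [Nat.succ_mul]; omega
    _ ≤ h * G.m := Nat.mul_le_mul_right _ i.isLt⟩

/-- `τ(n,k)`: the minimum number of edges (calls) of a `k`-fault-tolerant gossip
graph (scheme) on `n` nodes. -/
noncomputable def tau (n k : ℕ) : ℕ :=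
  sInf {c | ∃ G : LabeledGraph (Fin n), G.m = c ∧ G.IsFaultTolerant k}

/-- The Knödel graph `W_{Δ,n}` on `n = 2h` vertices: for each `j < h` and each
`l ∈ {1,…,Δ}` an edge labeled `l` between `(1,j)` and `(2, (j + 2^{l-1} - 1) mod h)`
(here `Fin 2` value `0` plays the role of `1`, and `1` the role of `2`). -/
def knodel (Δ h : ℕ) : LabeledGraph (Fin 2 × Fin h) where
  m := Δ * h
  ends := fun e =>
    have hh : 0 < h := pos_right_of_fin e
    s( ((0 : Fin 2), ⟨e.val % h, Nat.mod_lt _ hh⟩),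
       ((1 : Fin 2), ⟨(e.val % h + (2 ^ (e.val / h) - 1)) % h, Nat.mod_lt _ hh⟩) )
  label := fun e => e.val / h + 1

/-- The interval `R((α,β);(γ,δ))` in the Knödel graph on `2h` vertices (it does not
depend on `γ`); vertex class `0` plays the role of `1`, class `1` the role of `2`. -/
def knodelInterval (h : ℕ) (α : Fin 2) (β δ : ℕ) : ℕ :=
  if α = 0 then (if β ≤ δ then δ - β else h - (β - δ))
  else (if δ ≤ β then β - δ else h - (δ - β))

/-- The labeled wheel graph on `n = 2k+1` vertices: center `none` (vertex `u`),
rim vertices `some (i, 0) = vᵢ` and `some (i, 1) = vᵢ'`; edges `(vᵢ,vᵢ')` labeled 1,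
`(vᵢ',u)` labeled 2, `(vᵢ,u)` labeled 3, `(vᵢ', v_{i+1})` labeled 4. -/
def wheel (k : ℕ) : LabeledGraph (Option (Fin k × Fin 2)) where
  m := 4 * k
  ends := fun e =>
    have hk : 0 < k := pos_right_of_fin e
    let i : Fin k := ⟨e.val % k, Nat.mod_lt _ hk⟩
    if e.val / k = 0 then s(some (i, 0), some (i, 1))
    else if e.val / k = 1 then s(some (i, 1), none)
    else if e.val / k = 2 then s(some (i, 0), none)
    else s(some (i, 1), some (⟨(i.val + 1) % k, Nat.mod_lt _ hk⟩, 0))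
  label := fun e => e.val / k + 1

/-- A labeled graph is a valid (timed) schedule when simultaneous calls form a
matching: no two distinct edges with the same label share a vertex. -/
def IsMatchingSchedule (G : LabeledGraph V) : Prop :=
  ∀ e e' : Fin G.m, e ≠ e' → G.label e = G.label e' →
    ∀ v : V, ¬(v ∈ G.ends e ∧ v ∈ G.ends e')

/-- `T(n,k)`: the minimum completion time of a `k`-fault-tolerant gossip scheme on
`n` nodes in which non-overlapping pairs may call simultaneously. -/
noncomputable def minTime (n k : ℕ) : ℕ :=
  sInf {t | ∃ G : LabeledGraph (Fin n),
    G.IsMatchingSchedule ∧ G.IsFaultTolerant k ∧ G.maxLabel ≤ t}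

end LabeledGraph


namespace AMx
open List

variable {A : Type}

/-- An `R`-walk from set `S` to set `T`. -/
def AWalk (R : A → A → Prop) (S T : Set A) (l : List A) : Prop :=
  List.Chain' R l ∧ (∃ a, l.head? = some a ∧ a ∈ S) ∧ (∃ a, l.getLast? = some a ∧ a ∈ T)

lemma AWalk.ne_nil {R : A → A → Prop} {S T : Set A} {l : List A} (h : AWalk R S T l) :
    l ≠ [] := by
  rcases h with ⟨-, ⟨a, ha, -⟩, -⟩
  rintro rfl; simp at ha

/-- Truncation at the first hit of `C`. -/
lemma truncFirst {R : A → A → Prop} {C : Set A} {l : List A}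
    (hc : List.Chain' R l) (hhit : ∃ a ∈ l, a ∈ C) :
    ∃ l', l' <+: l ∧ l' ≠ [] ∧ l'.head? = l.head? ∧ List.Chain' R l' ∧
      (∃ b, l'.getLast? = some b ∧ b ∈ C) ∧ ∀ a ∈ l'.dropLast, a ∉ C := by
  induction l with
  | nil => simp at hhit
  | cons a t ih =>
    by_cases haC : a ∈ C
    · exact ⟨[a], ⟨t, rfl⟩, by simp, by simp, List.isChain_singleton _, ⟨a, by simp, haC⟩, by simp⟩
    · have hhit' : ∃ b ∈ t, b ∈ C := by
        rcases hhit with ⟨b, hb, hbC⟩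
        rcases List.mem_cons.mp hb with rfl | hb
        · exact absurd hbC haC
        · exact ⟨b, hb, hbC⟩
      rcases ih hc.tail hhit' with ⟨l', ⟨r, hr⟩, hne, hhd, hch, hlast, hdl⟩
      refine ⟨a :: l', ⟨r, by simp [← hr]⟩, by simp, by simp, ?_, ?_, ?_⟩
      · rcases List.exists_cons_of_ne_nil hne with ⟨b, t', rfl⟩
        have htb : t.head? = some b := by rw [← hhd]; simp
        rcases t with _ | ⟨c, t⟩
        · simp at htb
        · obtain rfl : c = b := by simpa using htb
          exact List.isChain_cons_cons.mpr ⟨(List.isChain_cons_cons.mp hc).1, hch⟩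
      · rcases hlast with ⟨b, hb, hbC⟩
        exact ⟨b, by rw [List.getLast?_cons, hb] <;> simp_all, hbC⟩
      · intro x hx
        rw [List.dropLast_cons_of_ne_nil hne] at hx
        rcases List.mem_cons.mp hx with rfl | hx
        · exact haC
        · exact hdl x hx


/-- Truncation at the last hit of `C`. -/
lemma truncLast {R : A → A → Prop} {C : Set A} {l : List A}
    (hc : List.Chain' R l) (hhit : ∃ a ∈ l, a ∈ C) :
    ∃ l', l' <:+ l ∧ l' ≠ [] ∧ l'.getLast? = l.getLast? ∧ List.Chain' R l' ∧
      (∃ b, l'.head? = some b ∧ b ∈ C) ∧ ∀ a ∈ l'.tail, a ∉ C := by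
  have hrc : List.Chain' (flip R) l.reverse := List.isChain_reverse.mpr hc
  have hrh : ∃ a ∈ l.reverse, a ∈ C := by simpa using hhit
  rcases truncFirst hrc hrh with ⟨p, hp, hne, hhd, hch, hlast, hdl⟩
  refine ⟨p.reverse, List.reverse_prefix.mp (by simpa using hp), by simpa, ?_,
    List.isChain_reverse.mpr hch, ?_, ?_⟩
  · rw [List.getLast?_reverse, hhd, List.head?_reverse]
  · rcases hlast with ⟨b, hb, hbC⟩
    exact ⟨b, by rw [List.head?_reverse, hb], hbC⟩
  · intro a ha
    rw [List.tail_reverse] at ha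
    exact hdl a (by simpa using ha)


lemma mem_of_getLast?' {l : List A} {b : A} (h : l.getLast? = some b) : b ∈ l := by
  rcases l with _ | ⟨a, t⟩
  · simp at h
  · have hne : (a :: t) ≠ [] := by simp
    rw [List.getLast?_eq_getLast hne] at h
    exact Option.some_inj.mp h ▸ List.getLast_mem hne

lemma head?_append_left {l₁ l₂ : List A} (h : l₁ ≠ []) : (l₁ ++ l₂).head? = l₁.head? := by
  cases l₁ <;> simp_all

lemma eq_dropLast_append {l : List A} {b : A} (h : l.getLast? = some b) :
    l = l.dropLast ++ [b] := by
  rcases l with _ | ⟨a, t⟩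
  · simp at h
  · have hne : (a :: t) ≠ [] := by simp
    rw [List.getLast?_eq_getLast hne] at h
    conv_lhs => rw [← List.dropLast_append_getLast hne]
    rw [Option.some_inj.mp h]

lemma mem_last_or_dropLast {l : List A} {b c : A} (h : l.getLast? = some b) (hc : c ∈ l) :
    c = b ∨ c ∈ l.dropLast := by
  rw [eq_dropLast_append h] at hc
  rcases List.mem_append.mp hc with h' | h'
  · exact Or.inr h'
  · simp at h'; exact Or.inl h'

/-- Split a chain at the first occurrence of the step `(x,y)` (if any). -/
lemma splitFirst {R : A → A → Prop} {x y : A} (hxy : x ≠ y) :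
    ∀ {l : List A}, List.Chain' R l →
      List.Chain' (fun a b => R a b ∧ ¬(a = x ∧ b = y)) l ∨
      ∃ l₁ l₂, l = l₁ ++ x :: y :: l₂ ∧
        List.Chain' (fun a b => R a b ∧ ¬(a = x ∧ b = y)) (l₁ ++ [x]) := by
  intro l
  induction l with
  | nil => intro _; exact Or.inl List.isChain_nil
  | cons a t ih =>
    intro hc
    rcases t with _ | ⟨b, t'⟩
    · exact Or.inl (List.isChain_singleton _)
    · have hab : R a b := (List.isChain_cons_cons.mp hc).1
      by_cases h : a = x ∧ b = y
      · exact Or.inr ⟨[], t', by simp [h.1, h.2], List.isChain_singleton _⟩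
      · rcases ih hc.tail with hL | ⟨l₁, l₂, heq, hch⟩
        · exact Or.inl (List.isChain_cons_cons.mpr ⟨⟨hab, h⟩, hL⟩)
        · refine Or.inr ⟨a :: l₁, l₂, by simp [heq], ?_⟩
          rcases l₁ with _ | ⟨c, r⟩
          · have hbx : b = x := by simpa using congrArg List.head? heq
            refine List.isChain_cons_cons.mpr ⟨⟨hbx ▸ hab, ?_⟩, by simp⟩
            rintro ⟨rfl, rfl⟩; exact hxy rfl
          · have hbc : b = c := by simpa using congrArg List.head? heq
            exact List.isChain_cons_cons.mpr ⟨⟨hbc ▸ hab, hbc ▸ h⟩, hch⟩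

/-- Split a chain at the last occurrence of the step `(x,y)` (if any). -/
lemma splitLast {R : A → A → Prop} {x y : A} :
    ∀ {l : List A}, List.Chain' R l →
      List.Chain' (fun a b => R a b ∧ ¬(a = x ∧ b = y)) l ∨
      ∃ l₁ l₂, l = l₁ ++ x :: y :: l₂ ∧
        List.Chain' (fun a b => R a b ∧ ¬(a = x ∧ b = y)) (y :: l₂) := by
  intro l
  induction l with
  | nil => intro _; exact Or.inl List.isChain_nil
  | cons a t ih =>
    intro hc
    rcases t with _ | ⟨b, t'⟩
    · exact Or.inl (List.isChain_singleton _)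
    · have hab : R a b := (List.isChain_cons_cons.mp hc).1
      rcases ih hc.tail with hL | ⟨l₁, l₂, heq, hch⟩
      · by_cases h : a = x ∧ b = y
        · exact Or.inr ⟨[], t', by simp [h.1, h.2], h.2 ▸ hL⟩
        · exact Or.inl (List.isChain_cons_cons.mpr ⟨⟨hab, h⟩, hL⟩)
      · exact Or.inr ⟨a :: l₁, l₂, by simp [heq], hch⟩

lemma indexing {k : ℕ} {D : Finset A} (hD : D.card = k + 1) (g : Fin (k + 1) → A)
    (hmem : ∀ i, g i ∈ D) (hinj : Function.Injective g) :
    ∃ σ : {a // a ∈ D} → Fin (k + 1), ∀ α, g (σ α) = (α : A) := by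
  classical
  let g' : Fin (k + 1) → {a // a ∈ D} := fun i => ⟨g i, hmem i⟩
  have hinj' : Function.Injective g' := fun i j h => hinj (congrArg Subtype.val h)
  have hcard : Fintype.card (Fin (k + 1)) = Fintype.card {a // a ∈ D} := by
    simp [Fintype.card_coe, hD]
  have hbij : Function.Bijective g' :=
    (Fintype.bijective_iff_injective_and_card g').mpr ⟨hinj', hcard⟩
  exact ⟨Function.surjInv hbij.2,
    fun α => congrArg Subtype.val (Function.surjInv_eq hbij.2 α)⟩


lemma mem_dropLast_of_left {c a : A} {l₁ l₂ : List A} (h : c ∈ l₁) :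
    c ∈ (l₁ ++ a :: l₂).dropLast := by
  rw [List.dropLast_append_of_ne_nil (by simp)]
  exact List.mem_append_left _ h

lemma mem_tail_of_right {c a : A} {l₁ l₂ : List A} (h : c ∈ l₂) :
    c ∈ (l₁ ++ a :: l₂).tail := by
  rcases l₁ with _ | ⟨d, r⟩
  · simpa using h
  · simp only [List.cons_append, List.tail_cons]
    exact List.mem_append_right _ (List.mem_cons_of_mem _ h)

/-- The key "crossing" lemma: a truncated front walk and a truncated back walk can
only meet at their common cut endpoint. -/
lemma cross {R' : A → A → Prop} {S T : Set A} {C X Y : Set A}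
    (hCX : C ⊆ X) (hCY : C ⊆ Y)
    (sep : ∀ l, AWalk R' S T l → ∃ c ∈ l, c ∈ C)
    {F B : List A} {α β : A}
    (hFch : List.Chain' R' F) (hFhd : ∃ a, F.head? = some a ∧ a ∈ S)
    (hFlast : F.getLast? = some α) (hFdl : ∀ a ∈ F.dropLast, a ∉ X)
    (hBch : List.Chain' R' B) (hBlast : ∃ a, B.getLast? = some a ∧ a ∈ T)
    (hBhd : B.head? = some β) (hBtl : ∀ a ∈ B.tail, a ∉ Y)
    {w : A} (hwF : w ∈ F) (hwB : w ∈ B) : w = α ∧ w = β ∧ w ∈ C := by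
  obtain ⟨F₁, F₂, hFsplit⟩ := List.append_of_mem hwF
  obtain ⟨B₁, B₂, hBsplit⟩ := List.append_of_mem hwB
  set Z : List A := (F₁ ++ [w]) ++ B₂ with hZ
  have hZch : List.Chain' R' Z := by
    have h1 : List.Chain' R' (F₁ ++ [w]) :=
      hFch.prefix ⟨F₂, by simp [hFsplit]⟩
    have h2 : List.Chain' R' (w :: B₂) :=
      hBch.suffix ⟨B₁, by simp [hBsplit]⟩
    refine List.isChain_append.mpr ⟨h1, (List.isChain_cons.mp h2).2, ?_⟩
    intro p hp q hq
    rw [List.getLast?_concat] at hp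
    cases hp
    exact (List.isChain_cons.mp h2).1 q hq
  have hZwalk : AWalk R' S T Z := by
    refine ⟨hZch, ?_, ?_⟩
    · rcases hFhd with ⟨a, ha, haS⟩
      refine ⟨a, ?_, haS⟩
      rcases F₁ with _ | ⟨d, r⟩
      · simp only [hFsplit, List.nil_append, List.head?_cons] at ha
        simpa [hZ] using ha
      · rw [hZ, List.append_assoc, head?_append_left (by simp)]
        rw [hFsplit, head?_append_left (by simp)] at ha
        exact ha
    · rcases hBlast with ⟨a, ha, haT⟩
      refine ⟨a, ?_, haT⟩
      rcases B₂ with _ | ⟨d, r⟩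
      · have : B.getLast? = some w := by
          rw [hBsplit]; exact List.getLast?_concat
        rw [this] at ha; cases ha
        simp [hZ, List.getLast?_concat]
      · rw [hZ, List.getLast?_append_of_ne_nil _ (by simp)]
        rw [hBsplit, List.getLast?_append_of_ne_nil _ (by simp),
          List.getLast?_cons_cons] at ha
        exact ha
  obtain ⟨c, hcZ, hcC⟩ := sep Z hZwalk
  have hcase : c ∈ F₁ ∨ c = w ∨ c ∈ B₂ := by
    rcases List.mem_append.mp hcZ with h | h
    · rcases List.mem_append.mp h with h | h
      · exact Or.inl h
      · exact Or.inr (Or.inl (by simpa using h))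
    · exact Or.inr (Or.inr h)
  rcases hcase with h | h | h
  · exact absurd (hCX hcC) (hFdl c (hFsplit ▸ mem_dropLast_of_left h))
  · subst h
    have hcα : c = α := by
      rcases mem_last_or_dropLast hFlast hwF with h' | h'
      · exact h'
      · exact absurd (hCX hcC) (hFdl c h')
    have hcβ : c = β := by
      have : c = β ∨ c ∈ B.tail := by
        rcases B with _ | ⟨b0, bt⟩
        · simp at hwB
        · cases hBhd
          rcases List.mem_cons.mp hwB with h' | h'
          · exact Or.inl h'
          · exact Or.inr (by simpa using h')
      rcases this with h' | h'
      · exact h'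
      · exact absurd (hCY hcC) (hBtl c h')
    exact ⟨hcα, hcβ, hcC⟩
  · exact absurd (hCY hcC) (hBtl c (hBsplit ▸ mem_tail_of_right h))


lemma mem_of_head?' {l : List A} {b : A} (h : l.head? = some b) : b ∈ l := by
  rcases l with _ | ⟨a, t⟩
  · simp at h
  · simp at h; simp [h]

lemma walk_empty_rel {S T : Set A} {l : List A}
    (h : AWalk (fun a b => (a, b) ∈ (∅ : Finset (A × A))) S T l) :
    ∃ a, l = [a] ∧ a ∈ S ∧ a ∈ T := by
  rcases h with ⟨hc, ⟨a, ha, haS⟩, ⟨b, hb, hbT⟩⟩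
  rcases l with _ | ⟨c, t⟩
  · simp at ha
  · rcases t with _ | ⟨d, t'⟩
    · simp at ha hb
      exact ⟨c, rfl, ha ▸ haS, hb ▸ hbT⟩
    · exact absurd (List.isChain_cons_cons.mp hc).1 (by simp)

theorem menger [Fintype A] (k : ℕ) (n : ℕ) :
    ∀ R : Finset (A × A), R.card = n → (∀ a : A, (a, a) ∉ R) → ∀ S T : Set A,
    (∀ C : Finset A, C.card ≤ k →
        ∃ l, AWalk (fun a b => (a, b) ∈ R) S T l ∧ ∀ a ∈ l, a ∉ C) →
    ∃ P : Fin (k + 1) → List A,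
      (∀ i, AWalk (fun a b => (a, b) ∈ R) S T (P i)) ∧
      ∀ i j, i ≠ j → List.Disjoint (P i) (P j) := by
  classical
  induction n using Nat.strong_induction_on with
  | _ n ih =>
  intro R hRn hirr S T H
  rcases Finset.eq_empty_or_nonempty R with rfl | ⟨⟨x, y⟩, he⟩
  · -- base case: no steps available, walks are singletons in S ∩ T
    set D := Finset.univ.filter (fun a => a ∈ S ∧ a ∈ T) with hD
    have hDcard : k + 1 ≤ D.card := by
      by_contra hlt
      push_neg at hlt
      obtain ⟨l, hl, hav⟩ := H D (by omega)
      obtain ⟨a, rfl, haS, haT⟩ := walk_empty_rel hl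
      exact hav a (by simp) (by simp [hD, haS, haT])
    obtain ⟨E, hED, hEc⟩ := Finset.exists_subset_card_eq hDcard
    let g : Fin (k + 1) → {a // a ∈ E} := E.equivFin.symm ∘ Fin.cast (by rw [hEc])
    have hg : Function.Injective g :=
      (Equiv.injective _).comp (Fin.cast_injective _)
    refine ⟨fun i => [(g i : A)], ?_, ?_⟩
    · intro i
      have hmem := hED (g i).2
      rw [hD, Finset.mem_filter] at hmem
      exact ⟨List.isChain_singleton _, ⟨_, rfl, hmem.2.1⟩, ⟨_, rfl, hmem.2.2⟩⟩
    · intro i j hij a ha hb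
      simp only [List.mem_singleton] at ha hb
      exact hij (hg (Subtype.ext (ha.symm.trans hb)))
  · -- inductive step
    have hxy : x ≠ y := fun h => hirr x (h ▸ he)
    set R' : Finset (A × A) := R.erase (x, y) with hR'
    have hR'card : R'.card < n := hRn ▸ Finset.card_erase_lt_of_mem he
    have hirr' : ∀ a : A, (a, a) ∉ R' := fun a h => hirr a (Finset.mem_of_mem_erase h)
    have hsub : ∀ a b : A, (a, b) ∈ R' → (a, b) ∈ R := fun a b h => Finset.mem_of_mem_erase h
    have hmemR' : ∀ a b : A, ((a, b) ∈ R') ↔ ((a, b) ∈ R ∧ ¬(a = x ∧ b = y)) := by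
      intro a b
      rw [hR', Finset.mem_erase]
      constructor
      · rintro ⟨h1, h2⟩
        exact ⟨h2, fun h3 => h1 (by rw [h3.1, h3.2])⟩
      · rintro ⟨h1, h2⟩
        refine ⟨fun h3 => h2 ?_, h1⟩
        · exact ⟨congrArg Prod.fst h3, congrArg Prod.snd h3⟩
    by_cases hH' : ∀ C : Finset A, C.card ≤ k →
        ∃ l, AWalk (fun a b => (a, b) ∈ R') S T l ∧ ∀ a ∈ l, a ∉ C
    · obtain ⟨P, hP, hPd⟩ := ih _ hR'card R' rfl hirr' S T hH'
      exact ⟨P, fun i => ⟨(hP i).1.imp (fun a b h => hsub a b h), (hP i).2.1, (hP i).2.2⟩, hPd⟩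
    · push_neg at hH'
      obtain ⟨C, hCk, hsep⟩ := hH'
      have sep : ∀ l, AWalk (fun a b => (a, b) ∈ R') S T l → ∃ c ∈ l, c ∈ C := by
        intro l hl
        by_contra h
        push_neg at h
        obtain ⟨c, hc1, hc2⟩ := hsep l hl
        exact h c hc1 hc2
      set X : Finset A := insert x C with hX
      set Y : Finset A := insert y C with hY
      have himp' : ∀ {l : List A},
          List.Chain' (fun a b => (a, b) ∈ R ∧ ¬(a = x ∧ b = y)) l →
          List.Chain' (fun a b => (a, b) ∈ R') l :=
        fun hl => hl.imp (fun a b h => (hmemR' a b).mpr h)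
      have sepX : ∀ l, AWalk (fun a b => (a, b) ∈ R) S T l → ∃ c ∈ l, c ∈ X := by
        intro l hl
        rcases splitFirst hxy hl.1 with hL | ⟨l₁, l₂, rfl, -⟩
        · obtain ⟨c, hc, hcC⟩ := sep l ⟨himp' hL, hl.2.1, hl.2.2⟩
          exact ⟨c, hc, Finset.mem_insert_of_mem hcC⟩
        · exact ⟨x, by simp, Finset.mem_insert_self _ _⟩
      have sepY : ∀ l, AWalk (fun a b => (a, b) ∈ R) S T l → ∃ c ∈ l, c ∈ Y := by
        intro l hl
        rcases splitLast (x := x) (y := y) hl.1 with hL | ⟨l₁, l₂, rfl, -⟩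
        · obtain ⟨c, hc, hcC⟩ := sep l ⟨himp' hL, hl.2.1, hl.2.2⟩
          exact ⟨c, hc, Finset.mem_insert_of_mem hcC⟩
        · exact ⟨y, by simp, Finset.mem_insert_self _ _⟩
      have hXcard : X.card = k + 1 ∧ x ∉ C := by
        have h1 : k + 1 ≤ X.card := by
          by_contra hlt
          push_neg at hlt
          obtain ⟨l, hl, hav⟩ := H X (by omega)
          obtain ⟨c, hc, hcX⟩ := sepX l hl
          exact hav c hc hcX
        have h2 : X.card ≤ C.card + 1 := Finset.card_insert_le _ _
        have hxC : x ∉ C := by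
          intro hxC
          rw [hX, Finset.insert_eq_self.mpr hxC] at h1
          omega
        exact ⟨by omega, hxC⟩
      have hYcard : Y.card = k + 1 ∧ y ∉ C := by
        have h1 : k + 1 ≤ Y.card := by
          by_contra hlt
          push_neg at hlt
          obtain ⟨l, hl, hav⟩ := H Y (by omega)
          obtain ⟨c, hc, hcY⟩ := sepY l hl
          exact hav c hc hcY
        have h2 : Y.card ≤ C.card + 1 := Finset.card_insert_le _ _
        have hyC : y ∉ C := by
          intro hyC
          rw [hY, Finset.insert_eq_self.mpr hyC] at h1
          omega
        exact ⟨by omega, hyC⟩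
      -- the front system
      have HF : ∀ C' : Finset A, C'.card ≤ k →
          ∃ l, AWalk (fun a b => (a, b) ∈ R') S (↑X : Set A) l ∧ ∀ a ∈ l, a ∉ C' := by
        intro C' hC'
        by_contra hcon
        push_neg at hcon
        have sepF : ∀ l, AWalk (fun a b => (a, b) ∈ R') S (↑X : Set A) l →
            ∃ c ∈ l, c ∈ C' := by
          intro l hl
          by_contra h
          push_neg at h
          obtain ⟨c, hc1, hc2⟩ := hcon l hl
          exact h c hc1 hc2
        obtain ⟨l, hl, hav⟩ := H C' hC'
        rcases splitFirst hxy hl.1 with hL | ⟨l₁, l₂, heq, hch⟩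
        · have hl' : AWalk (fun a b => (a, b) ∈ R') S T l := ⟨himp' hL, hl.2.1, hl.2.2⟩
          obtain ⟨c, hc, hcC⟩ := sep l hl'
          obtain ⟨l', hpre, hne, hhd, hch', hlast, -⟩ :=
            truncFirst (C := (↑C : Set A)) hl'.1 ⟨c, hc, by simpa using hcC⟩
          have hw : AWalk (fun a b => (a, b) ∈ R') S (↑X : Set A) l' := by
            refine ⟨hch', by rw [hhd]; exact hl.2.1, ?_⟩
            obtain ⟨b, hb, hbC⟩ := hlast
            exact ⟨b, hb, Finset.mem_coe.mpr
              (Finset.mem_insert_of_mem (Finset.mem_coe.mp hbC))⟩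
          obtain ⟨d, hd, hdC'⟩ := sepF l' hw
          exact hav d (hpre.subset hd) hdC'
        · have hw : AWalk (fun a b => (a, b) ∈ R') S (↑X : Set A) (l₁ ++ [x]) := by
            refine ⟨himp' hch, ?_, ⟨x, List.getLast?_concat,
              Finset.mem_coe.mpr (Finset.mem_insert_self _ _)⟩⟩
            have hhh : (l₁ ++ [x]).head? = l.head? := by
              rw [heq]; rcases l₁ with _ | ⟨d, r⟩ <;> simp
            rw [hhh]; exact hl.2.1
          obtain ⟨d, hd, hdC'⟩ := sepF _ hw
          have hdl : d ∈ l := by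
            rw [heq]
            rcases List.mem_append.mp hd with h | h
            · exact List.mem_append_left _ h
            · simp only [List.mem_singleton] at h
              subst h
              exact List.mem_append_right _ (by simp)
          exact hav d hdl hdC'
      -- the back system
      have HB : ∀ C' : Finset A, C'.card ≤ k →
          ∃ l, AWalk (fun a b => (a, b) ∈ R') (↑Y : Set A) T l ∧ ∀ a ∈ l, a ∉ C' := by
        intro C' hC'
        by_contra hcon
        push_neg at hcon
        have sepB : ∀ l, AWalk (fun a b => (a, b) ∈ R') (↑Y : Set A) T l →
            ∃ c ∈ l, c ∈ C' := by
          intro l hl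
          by_contra h
          push_neg at h
          obtain ⟨c, hc1, hc2⟩ := hcon l hl
          exact h c hc1 hc2
        obtain ⟨l, hl, hav⟩ := H C' hC'
        rcases splitLast (x := x) (y := y) hl.1 with hL | ⟨l₁, l₂, heq, hch⟩
        · have hl' : AWalk (fun a b => (a, b) ∈ R') S T l := ⟨himp' hL, hl.2.1, hl.2.2⟩
          obtain ⟨c, hc, hcC⟩ := sep l hl'
          obtain ⟨l', hsuf, hne, hlst, hch', hhd, -⟩ :=
            truncLast (C := (↑C : Set A)) hl'.1 ⟨c, hc, by simpa using hcC⟩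
          have hw : AWalk (fun a b => (a, b) ∈ R') (↑Y : Set A) T l' := by
            refine ⟨hch', ?_, by rw [hlst]; exact hl.2.2⟩
            obtain ⟨b, hb, hbC⟩ := hhd
            exact ⟨b, hb, Finset.mem_coe.mpr
              (Finset.mem_insert_of_mem (Finset.mem_coe.mp hbC))⟩
          obtain ⟨d, hd, hdC'⟩ := sepB l' hw
          exact hav d (hsuf.subset hd) hdC'
        · have hw : AWalk (fun a b => (a, b) ∈ R') (↑Y : Set A) T (y :: l₂) := by
            refine ⟨himp' hch, ⟨y, rfl, Finset.mem_coe.mpr (Finset.mem_insert_self _ _)⟩, ?_⟩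
            have hhh : (y :: l₂).getLast? = l.getLast? := by
              rw [heq, List.getLast?_append_of_ne_nil _ (by simp), List.getLast?_cons_cons]
            rw [hhh]; exact hl.2.2
          obtain ⟨d, hd, hdC'⟩ := sepB _ hw
          have hdl : d ∈ l := by
            rw [heq]
            exact List.mem_append_right _ (List.mem_cons_of_mem _ hd)
          exact hav d hdl hdC'
      obtain ⟨F0, hF0, hF0d⟩ := ih _ hR'card R' rfl hirr' S (↑X : Set A) HF
      obtain ⟨B0, hB0, hB0d⟩ := ih _ hR'card R' rfl hirr' (↑Y : Set A) T HB
      -- truncate the front walks at their first hit of X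
      have hFex : ∀ i : Fin (k + 1), ∃ l', l' <+: F0 i ∧ l' ≠ [] ∧
          l'.head? = (F0 i).head? ∧ List.Chain' (fun a b => (a, b) ∈ R') l' ∧
          (∃ b, l'.getLast? = some b ∧ b ∈ (↑X : Set A)) ∧
          ∀ a ∈ l'.dropLast, a ∉ (↑X : Set A) := by
        intro i
        obtain ⟨b, hb, hbX⟩ := (hF0 i).2.2
        exact truncFirst (hF0 i).1 ⟨b, mem_of_getLast?' hb, hbX⟩
      choose F hFpre hFne hFhd hFch hFlastE hFdl using hFex
      choose gF hgF hgFX using hFlastE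
      -- truncate the back walks at their last hit of Y
      have hBex : ∀ i : Fin (k + 1), ∃ l', l' <:+ B0 i ∧ l' ≠ [] ∧
          l'.getLast? = (B0 i).getLast? ∧ List.Chain' (fun a b => (a, b) ∈ R') l' ∧
          (∃ b, l'.head? = some b ∧ b ∈ (↑Y : Set A)) ∧
          ∀ a ∈ l'.tail, a ∉ (↑Y : Set A) := by
        intro i
        obtain ⟨b, hb, hbY⟩ := (hB0 i).2.1
        exact truncLast (hB0 i).1 ⟨b, mem_of_head?' hb, hbY⟩
      choose B hBsuf hBne hBlst hBch hBhdE hBtl using hBex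
      choose gB hgB hgBY using hBhdE
      have hgFinj : Function.Injective gF := by
        intro i j hij
        by_contra hne'
        have h2 : gF i ∈ F j := by rw [hij]; exact mem_of_getLast?' (hgF j)
        exact hF0d i j hne' ((hFpre i).subset (mem_of_getLast?' (hgF i)))
          ((hFpre j).subset h2)
      have hgBinj : Function.Injective gB := by
        intro i j hij
        by_contra hne'
        have h2 : gB i ∈ B j := by rw [hij]; exact mem_of_head?' (hgB j)
        exact hB0d i j hne' ((hBsuf i).subset (mem_of_head?' (hgB i)))
          ((hBsuf j).subset h2)
      obtain ⟨σF, hσF⟩ := indexing hXcard.1 gF (fun i => Finset.mem_coe.mp (hgFX i)) hgFinj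
      obtain ⟨σB, hσB⟩ := indexing hYcard.1 gB (fun i => Finset.mem_coe.mp (hgBY i)) hgBinj
      have hyY : y ∈ Y := Finset.mem_insert_self _ _
      have hmemC : ∀ α : {a // a ∈ X}, (α : A) ≠ x → (α : A) ∈ C := by
        intro α h
        rcases Finset.mem_insert.mp α.2 with h' | h'
        · exact absurd h' h
        · exact h'
      set idx : {a // a ∈ X} → {a // a ∈ Y} := fun α =>
        if h : (α : A) = x then ⟨y, hyY⟩
        else ⟨α, Finset.mem_insert_of_mem (hmemC α h)⟩ with hidxdef
      have hidxval : ∀ α : {a // a ∈ X}, ((idx α : A) = y ∧ (α : A) = x) ∨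
          ((idx α : A) = (α : A) ∧ (α : A) ∈ C) := by
        intro α
        by_cases h : (α : A) = x
        · left
          refine ⟨?_, h⟩
          rw [hidxdef]; simp only [dif_pos h]
        · right
          refine ⟨?_, hmemC α h⟩
          rw [hidxdef]; simp only [dif_neg h]
      have hidxinj : Function.Injective idx := by
        intro α β h
        have hv : (idx α : A) = (idx β : A) := congrArg Subtype.val h
        rcases hidxval α with ⟨h1, h2⟩ | ⟨h1, h2⟩ <;>
          rcases hidxval β with ⟨h3, h4⟩ | ⟨h3, h4⟩
        · exact Subtype.ext (h2.trans h4.symm)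
        · exfalso; apply hYcard.2
          rw [← h1, hv, h3]; exact h4
        · exfalso; apply hYcard.2
          rw [← h3, ← hv, h1]; exact h2
        · exact Subtype.ext ((h1.symm.trans hv).trans h3)
      set glue : {a // a ∈ X} → List A := fun α =>
        F (σF α) ++ (if (α : A) = x then B (σB (idx α)) else (B (σB (idx α))).tail)
        with hgluedef
      have hRel : ∀ {l : List A}, List.Chain' (fun a b => (a, b) ∈ R') l →
          List.Chain' (fun a b => (a, b) ∈ R) l := fun hl => hl.imp (fun a b h => hsub a b h)
      have hFl : ∀ α : {a // a ∈ X}, (F (σF α)).getLast? = some (α : A) := by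
        intro α; rw [hgF (σF α), hσF α]
      have hBh : ∀ α : {a // a ∈ X}, (B (σB (idx α))).head? = some ((idx α : A)) := by
        intro α; rw [hgB (σB (idx α)), hσB (idx α)]
      have hwalk : ∀ α, AWalk (fun a b => (a, b) ∈ R) S T (glue α) := by
        intro α
        by_cases h : (α : A) = x
        · have hidxx : (idx α : A) = y := by
            rcases hidxval α with ⟨h1, -⟩ | ⟨-, h2⟩
            · exact h1
            · exact absurd (h ▸ h2) hXcard.2
          have hg : glue α = F (σF α) ++ B (σB (idx α)) := by
            rw [hgluedef]; simp only [if_pos h]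
          rw [hg]
          refine ⟨?_, ?_, ?_⟩
          · refine List.isChain_append.mpr ⟨hRel (hFch (σF α)), hRel (hBch (σB (idx α))), ?_⟩
            intro p hp q hq
            rw [hFl α] at hp
            rw [hBh α] at hq
            simp only [Option.mem_def, Option.some_inj] at hp hq
            rw [← hp, ← hq, h, hidxx]
            exact he
          · obtain ⟨a, ha, haS⟩ := (hF0 (σF α)).2.1
            exact ⟨a, by rw [head?_append_left (hFne (σF α)), hFhd (σF α)]; exact ha, haS⟩
          · obtain ⟨a, ha, haT⟩ := (hB0 (σB (idx α))).2.2
            exact ⟨a, by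
              rw [List.getLast?_append_of_ne_nil _ (hBne (σB (idx α))), hBlst (σB (idx α))]
              exact ha, haT⟩
        · have hidxx : (idx α : A) = (α : A) := by
            rcases hidxval α with ⟨-, h2⟩ | ⟨h1, -⟩
            · exact absurd h2 h
            · exact h1
          have hg : glue α = F (σF α) ++ (B (σB (idx α))).tail := by
            rw [hgluedef]; simp only [if_neg h]
          have hBj : B (σB (idx α)) = (α : A) :: (B (σB (idx α))).tail := by
            rcases hBe : B (σB (idx α)) with _ | ⟨b0, bt⟩
            · exact absurd hBe (hBne _)
            · have := hBh α
              rw [hBe] at this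
              simp only [List.head?_cons, Option.some_inj] at this
              rw [this, hidxx]
              simp
          rw [hg]
          rcases hbt : (B (σB (idx α))).tail with _ | ⟨b1, bt'⟩
          · rw [List.append_nil]
            refine ⟨hRel (hFch (σF α)), ?_, ?_⟩
            · obtain ⟨a, ha, haS⟩ := (hF0 (σF α)).2.1
              exact ⟨a, by rw [hFhd (σF α)]; exact ha, haS⟩
            · obtain ⟨a, ha, haT⟩ := (hB0 (σB (idx α))).2.2
              have hlast1 : (B (σB (idx α))).getLast? = some (α : A) := by
                rw [hBj, hbt]; rfl
              rw [hBlst (σB (idx α))] at hlast1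
              rw [hlast1] at ha
              simp only [Option.some_inj] at ha
              exact ⟨(α : A), hFl α, ha ▸ haT⟩
          · refine ⟨?_, ?_, ?_⟩
            · have hchtl : List.Chain' (fun a b => (a, b) ∈ R') (b1 :: bt') := by
                rw [← hbt]; exact (hBch (σB (idx α))).tail
              refine List.isChain_append.mpr ⟨hRel (hFch (σF α)), hRel hchtl, ?_⟩
              intro p hp q hq
              rw [hFl α] at hp
              simp only [Option.mem_def, Option.some_inj] at hp
              simp only [List.head?_cons, Option.mem_def, Option.some_inj] at hq
              have hch2 : List.Chain' (fun a b => (a, b) ∈ R')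
                  ((α : A) :: b1 :: bt') := by
                rw [← hbt, ← hBj]; exact hBch (σB (idx α))
              rw [← hp, ← hq]
              exact hsub _ _ (List.isChain_cons_cons.mp hch2).1
            · obtain ⟨a, ha, haS⟩ := (hF0 (σF α)).2.1
              exact ⟨a, by rw [head?_append_left (hFne (σF α)), hFhd (σF α)]; exact ha, haS⟩
            · obtain ⟨a, ha, haT⟩ := (hB0 (σB (idx α))).2.2
              refine ⟨a, ?_, haT⟩
              rw [List.getLast?_append_of_ne_nil _ (by simp)]
              have : (b1 :: bt').getLast? = (B (σB (idx α))).getLast? := by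
                rw [hBj, hbt, List.getLast?_cons_cons]
              rw [this, hBlst (σB (idx α))]
              exact ha
      -- pairwise disjointness
      have sep' : ∀ l, AWalk (fun a b => (a, b) ∈ R') S T l →
          ∃ c ∈ l, c ∈ (↑C : Set A) := by
        intro l hl
        obtain ⟨c, hc1, hc2⟩ := sep l hl
        exact ⟨c, hc1, by simpa using hc2⟩
      have hCX : (↑C : Set A) ⊆ (↑X : Set A) :=
        Finset.coe_subset.mpr (Finset.subset_insert _ _)
      have hCY : (↑C : Set A) ⊆ (↑Y : Set A) :=
        Finset.coe_subset.mpr (Finset.subset_insert _ _)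
      have hcross : ∀ (α β : {a // a ∈ X}) (w : A),
          w ∈ F (σF α) → w ∈ B (σB (idx β)) → α = β := by
        intro α β w hwF hwB
        have hFhd' : ∃ a, (F (σF α)).head? = some a ∧ a ∈ S := by
          obtain ⟨a, ha, haS⟩ := (hF0 (σF α)).2.1
          exact ⟨a, by rw [hFhd (σF α)]; exact ha, haS⟩
        have hBlst' : ∃ a, (B (σB (idx β))).getLast? = some a ∧ a ∈ T := by
          obtain ⟨a, ha, haT⟩ := (hB0 (σB (idx β))).2.2
          exact ⟨a, by rw [hBlst (σB (idx β))]; exact ha, haT⟩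
        obtain ⟨h1, h2, h3⟩ := cross hCX hCY sep' (hFch (σF α)) hFhd' (hFl α)
          (hFdl (σF α)) (hBch (σB (idx β))) hBlst' (hBh β) (hBtl (σB (idx β))) hwF hwB
        have h3' : w ∈ C := by simpa using h3
        rcases hidxval β with ⟨hb1, hb2⟩ | ⟨hb1, hb2⟩
        · exfalso
          apply hYcard.2
          rw [← hb1, ← h2]
          exact h3'
        · exact Subtype.ext (h1.symm.trans (h2.trans hb1))
      have hdisj : ∀ α β, α ≠ β → List.Disjoint (glue α) (glue β) := by
        intro α β hne' w hwα hwβ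
        have hsubF : ∀ γ, w ∈ glue γ → w ∈ F (σF γ) ∨ w ∈ B (σB (idx γ)) := by
          intro γ hw
          rw [hgluedef] at hw
          rcases List.mem_append.mp hw with hx1 | hx1
          · exact Or.inl hx1
          · by_cases hc : (γ : A) = x
            · rw [if_pos hc] at hx1; exact Or.inr hx1
            · rw [if_neg hc] at hx1; exact Or.inr (List.mem_of_mem_tail hx1)
        have hσFinj : Function.Injective σF := by
          intro γ δ hγδ
          have : (γ : A) = (δ : A) := by rw [← hσF γ, ← hσF δ, hγδ]
          exact Subtype.ext this
        have hσBinj : Function.Injective σB := by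
          intro γ δ hγδ
          have : (γ : A) = (δ : A) := by rw [← hσB γ, ← hσB δ, hγδ]
          exact Subtype.ext this
        rcases hsubF α hwα with hA | hA <;> rcases hsubF β hwβ with hB' | hB'
        · exact hF0d _ _ (fun hcontra => hne' (hσFinj hcontra))
            ((hFpre _).subset hA) ((hFpre _).subset hB')
        · exact hne' (hcross α β w hA hB')
        · exact hne' (hcross β α w hB' hA).symm
        · refine hB0d _ _ (fun hcontra => hne' (hidxinj (hσBinj hcontra)))
            ((hBsuf _).subset hA) ((hBsuf _).subset hB')
      set eqv : Fin (k + 1) ≃ {a // a ∈ X} :=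
        (finCongr hXcard.1.symm).trans X.equivFin.symm with heqv
      exact ⟨fun i => glue (eqv i), fun i => hwalk _,
        fun i j hij => hdisj _ _ (fun hcontra => hij (eqv.injective hcontra))⟩

end AMx

namespace AMx

variable {V : Type} (G : LabeledGraph V)

/-- Tail of an oriented edge. -/
noncomputable def tl (a : Fin G.m × Bool) : V :=
  if a.2 then (Quot.out (G.ends a.1)).2 else (Quot.out (G.ends a.1)).1

/-- Head of an oriented edge. -/
noncomputable def hd (a : Fin G.m × Bool) : V :=
  if a.2 then (Quot.out (G.ends a.1)).1 else (Quot.out (G.ends a.1)).2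

/-- The "ascending adjacency" relation on oriented edges. -/
def Rel (a b : Fin G.m × Bool) : Prop :=
  hd G a = tl G b ∧ G.label a.1 < G.label b.1

lemma ends_eq (a : Fin G.m × Bool) : G.ends a.1 = s(tl G a, hd G a) := by
  set p := Quot.out (G.ends a.1) with hp
  have h : Quot.mk (Sym2.Rel V) p = G.ends a.1 := Quot.out_eq _
  have h2 : s(p.1, p.2) = Quot.mk (Sym2.Rel V) p := congrArg (Quot.mk (Sym2.Rel V)) Prod.mk.eta
  cases hb : a.2
  · simp only [tl, hd, hb, Bool.false_eq_true, if_false, ← hp]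
    rw [← h]
  · simp only [tl, hd, hb, if_true, ← hp]
    rw [← h, Sym2.eq_swap]

lemma exists_orient {e : Fin G.m} {u w : V} (h : G.ends e = s(u, w)) :
    ∃ b, tl G (e, b) = u ∧ hd G (e, b) = w := by
  set p := Quot.out (G.ends e) with hp
  have h2 : Quot.mk (Sym2.Rel V) p = G.ends e := Quot.out_eq _
  have h3 : s(p.1, p.2) = s(u, w) :=
    ((congrArg (Quot.mk (Sym2.Rel V)) Prod.mk.eta).trans h2).trans h
  rcases Sym2.eq_iff.mp h3 with ⟨h4, h5⟩ | ⟨h4, h5⟩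
  · refine ⟨false, ?_, ?_⟩
    · simp only [tl, if_false, Bool.false_eq_true, ← hp]; exact h4
    · simp only [hd, if_false, Bool.false_eq_true, ← hp]; exact h5
  · refine ⟨true, ?_, ?_⟩
    · simp only [tl, if_true, ← hp]; exact h5
    · simp only [hd, if_true, ← hp]; exact h4

lemma flip_tl_hd (f : Fin G.m) (b : Bool) :
    hd G (f, !b) = tl G (f, b) ∧ tl G (f, !b) = hd G (f, b) := by
  cases b <;> simp [tl, hd]

lemma chain_isWalk : ∀ (l : List (Fin G.m × Bool)) (a : Fin G.m × Bool),
    List.Chain' (Rel G) (a :: l) →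
    G.IsWalk (tl G a) (hd G ((a :: l).getLast (List.cons_ne_nil a l)))
      ((a :: l).map Prod.fst) := by
  intro l
  induction l with
  | nil =>
    intro a _
    exact LabeledGraph.IsWalk.cons (ends_eq G a) (LabeledGraph.IsWalk.nil _)
  | cons b t ihl =>
    intro a hch
    have hab : Rel G a b := (List.isChain_cons_cons.mp hch).1
    have hw := ihl b hch.tail
    rw [← hab.1] at hw
    have hlast : (a :: b :: t).getLast (List.cons_ne_nil _ _) =
        (b :: t).getLast (List.cons_ne_nil _ _) := List.getLast_cons _
    rw [hlast]
    exact LabeledGraph.IsWalk.cons (ends_eq G a) hw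

lemma arcwalk_to_asc {u v : V} {l : List (Fin G.m × Bool)}
    (h : AWalk (Rel G) {a | tl G a = u} {a | hd G a = v} l) :
    G.IsAscPath u v (l.map Prod.fst) := by
  obtain ⟨hch, ⟨a, ha, haS⟩, ⟨b, hb, hbT⟩⟩ := h
  rcases l with _ | ⟨a0, t⟩
  · simp at ha
  · have ha' : a0 = a := by simpa using ha
    subst ha'
    constructor
    · have hw := chain_isWalk G t a0 hch
      rw [show tl G a0 = u from haS] at hw
      have hgl : (a0 :: t).getLast? = some ((a0 :: t).getLast (List.cons_ne_nil a0 t)) :=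
        List.getLast?_eq_getLast _
      rw [hgl] at hb
      have hb' : (a0 :: t).getLast (List.cons_ne_nil a0 t) = b := by simpa using hb
      rw [hb', show hd G b = v from hbT] at hw
      exact hw
    · have hmm : (a0 :: t).map (fun x => G.label x.1) =
          ((a0 :: t).map Prod.fst).map G.label := by
        rw [List.map_map]; rfl
      rw [← hmm]
      exact (List.isChain_map _).mpr (hch.imp (fun p q hpq => hpq.2))


lemma nodup_fst {l : List (Fin G.m × Bool)} (h : List.Chain' (Rel G) l) :
    (l.map Prod.fst).Nodup := by
  have h1 : List.Chain' (· < ·) (l.map (fun x => G.label x.1)) :=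
    (List.isChain_map _).mpr (h.imp fun a b hab => hab.2)
  have h2 : List.Pairwise (· < ·) (l.map (fun x => G.label x.1)) :=
    List.isChain_iff_pairwise.mp h1
  have h3 : (l.map (fun x => G.label x.1)).Nodup := h2.imp (fun hab => Nat.ne_of_lt hab)
  have h4 : ((l.map Prod.fst).map G.label).Nodup := by
    rw [List.map_map]; exact h3
  exact List.Nodup.of_map _ h4

lemma swap_walk {u v : V} (huv : u ≠ v) {P₁ P₂ Q₁ Q₂ : List (Fin G.m × Bool)}
    {a a' : Fin G.m × Bool}
    (hw1 : AWalk (Rel G) {x | tl G x = u} {x | hd G x = v} (P₁ ++ a :: P₂))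
    (hw2 : AWalk (Rel G) {x | tl G x = u} {x | hd G x = v} (Q₁ ++ a' :: Q₂))
    (hth : hd G a' = tl G a) (hlabel : G.label a'.1 = G.label a.1) :
    AWalk (Rel G) {x | tl G x = u} {x | hd G x = v} (P₁ ++ Q₂) := by
  obtain ⟨hch1, hhd1, hlst1⟩ := hw1
  obtain ⟨hch2, hhd2, hlst2⟩ := hw2
  obtain ⟨chP₁, chaP₂, J1⟩ := List.isChain_append.mp hch1
  obtain ⟨chQ₁, chaQ₂, J2⟩ := List.isChain_append.mp hch2
  have Ja'Q₂ : ∀ q ∈ Q₂.head?, Rel G a' q := (List.isChain_cons.mp chaQ₂).1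
  have chQ₂ : List.Chain' (Rel G) Q₂ := (List.isChain_cons.mp chaQ₂).2
  have htla : P₁ = [] → tl G a = u := by
    intro hP
    obtain ⟨z, hz, hzu⟩ := hhd1
    rw [hP] at hz
    simp only [List.nil_append, List.head?_cons, Option.some_inj] at hz
    rw [← hz] at hzu
    exact hzu
  have hhda' : Q₂ = [] → hd G a' = v := by
    intro hQ
    obtain ⟨z, hz, hzv⟩ := hlst2
    rw [hQ, List.getLast?_append_of_ne_nil _ (by simp)] at hz
    simp only [List.getLast?_singleton, Option.some_inj] at hz
    rw [← hz] at hzv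
    exact hzv
  have hnotboth : ¬(P₁ = [] ∧ Q₂ = []) := by
    rintro ⟨hP, hQ⟩
    apply huv
    rw [← htla hP, ← hth, hhda' hQ]
  refine ⟨?_, ?_, ?_⟩
  · refine List.isChain_append.mpr ⟨chP₁, chQ₂, ?_⟩
    intro p hp q hq
    have hpa : Rel G p a := J1 p hp a (by simp)
    have haq : Rel G a' q := Ja'Q₂ q hq
    exact ⟨hpa.1.trans (hth.symm ▸ haq.1), lt_trans hpa.2 (hlabel ▸ haq.2)⟩
  · by_cases hP : P₁ = []
    · by_cases hQ : Q₂ = []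
      · exact absurd ⟨hP, hQ⟩ hnotboth
      · obtain ⟨q0, qt, hQ'⟩ := List.exists_cons_of_ne_nil hQ
        refine ⟨q0, by rw [hP, hQ']; rfl, ?_⟩
        have haq : Rel G a' q0 := Ja'Q₂ q0 (by rw [hQ']; rfl)
        show tl G q0 = u
        rw [← haq.1, hth, htla hP]
    · obtain ⟨z, hz, hzu⟩ := hhd1
      refine ⟨z, ?_, hzu⟩
      rw [head?_append_left hP]
      rw [head?_append_left hP] at hz
      exact hz
  · by_cases hQ : Q₂ = []
    · by_cases hP : P₁ = []
      · exact absurd ⟨hP, hQ⟩ hnotboth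
      · rw [hQ, List.append_nil]
        obtain ⟨z, hz⟩ : ∃ z, P₁.getLast? = some z := by
          obtain ⟨p0, pt, hP'⟩ := List.exists_cons_of_ne_nil hP
          exact ⟨_, by rw [hP']; exact List.getLast?_eq_getLast (by simp)⟩
        refine ⟨z, hz, ?_⟩
        have hpa : Rel G z a := J1 z hz a (by simp)
        show hd G z = v
        rw [hpa.1, ← hth, hhda' hQ]
    · obtain ⟨z, hz, hzv⟩ := hlst2
      refine ⟨z, ?_, hzv⟩
      rw [List.getLast?_append_of_ne_nil _ hQ]
      rw [List.getLast?_append_of_ne_nil _ (by simp), ← List.singleton_append,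
          List.getLast?_append_of_ne_nil _ hQ] at hz
      exact hz

lemma isWalk_to_arcwalk : ∀ {u v : V} {es : List (Fin G.m)}, G.IsWalk u v es →
    List.Chain' (fun e e' : Fin G.m => G.label e < G.label e') es → es ≠ [] →
    ∃ l : List (Fin G.m × Bool), l.map Prod.fst = es ∧ List.Chain' (Rel G) l ∧
      (∃ a, l.head? = some a ∧ tl G a = u) ∧ (∃ a, l.getLast? = some a ∧ hd G a = v) := by
  intro u v es hw
  induction hw with
  | nil w => intro _ h; exact absurd rfl h
  | @cons u' w' v' e es' hends hwalk ihw =>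
    intro hlab _
    obtain ⟨b, hbt, hbh⟩ := exists_orient G hends
    by_cases hne' : es' = []
    · subst hne'
      have hwv : w' = v' := by cases hwalk; rfl
      exact ⟨[(e, b)], by simp, List.isChain_singleton _, ⟨(e, b), rfl, hbt⟩,
        ⟨(e, b), rfl, hwv ▸ hbh⟩⟩
    · obtain ⟨l', hmap, hch, ⟨a1, ha1, ha1t⟩, hlst⟩ := ihw hlab.tail hne'
      have hl'ne : l' ≠ [] := by
        intro hnil; rw [hnil] at hmap; exact hne' hmap.symm
      refine ⟨(e, b) :: l', by simp [hmap], ?_, ⟨(e, b), rfl, hbt⟩, ?_⟩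
      · refine List.isChain_cons.mpr ⟨?_, hch⟩
        intro q hq
        rw [ha1] at hq
        simp only [Option.mem_def, Option.some_inj] at hq
        subst hq
        constructor
        · rw [hbh, ha1t]
        · have hq1 : es'.head? = some a1.1 := by
            rw [← hmap, List.head?_map, ha1]; rfl
          exact (List.isChain_cons.mp hlab).1 a1.1 hq1
      · obtain ⟨a2, ha2, ha2h⟩ := hlst
        exact ⟨a2, by rw [List.getLast?_cons, ha2]; simp [hl'ne], ha2h⟩


lemma uncross {u v : V} (huv : u ≠ v) (k : ℕ) :
    ∀ (n : ℕ) (W : Fin (k + 1) → List (Fin G.m × Bool)),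
      (∑ i, (W i).length) = n →
      (∀ i, AWalk (Rel G) {x | tl G x = u} {x | hd G x = v} (W i)) →
      (∀ i j, i ≠ j → List.Disjoint (W i) (W j)) →
      ∃ P : Fin (k + 1) → List (Fin G.m),
        (∀ i, G.IsAscPath u v (P i)) ∧
        (∀ i j, i ≠ j → List.Disjoint (P i) (P j)) := by
  classical
  intro n
  induction n using Nat.strong_induction_on with
  | _ n ih =>
  intro W hlen hW hWd
  by_cases hgood : ∀ i j, i ≠ j →
      List.Disjoint ((W i).map Prod.fst) ((W j).map Prod.fst)
  · exact ⟨fun i => (W i).map Prod.fst, fun i => arcwalk_to_asc G (hW i), hgood⟩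
  · push_neg at hgood
    obtain ⟨i, j, hij, hnd⟩ := hgood
    have hex : ∃ f, f ∈ (W i).map Prod.fst ∧ f ∈ (W j).map Prod.fst := by
      by_contra hno
      push_neg at hno
      exact hnd (fun f hf => hno f hf)
    obtain ⟨f, hfi, hfj⟩ := hex
    obtain ⟨a, hai, ha1⟩ := List.mem_map.mp hfi
    obtain ⟨a', haj, ha'1⟩ := List.mem_map.mp hfj
    have hane : a ≠ a' := fun h => hWd i j hij hai (h ▸ haj)
    have ha' : a' = (a.1, !a.2) := by
      have h1 : a'.1 = a.1 := ha'1.trans ha1.symm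
      have h2 : a'.2 = !a.2 := by
        rcases a with ⟨f1, b1⟩; rcases a' with ⟨f2, b2⟩
        simp only at h1
        subst h1
        cases b1 <;> cases b2 <;> simp_all
      rcases a' with ⟨f2, b2⟩
      simp only at h1 h2
      rw [h1, h2]
    have hth : hd G a' = tl G a ∧ tl G a' = hd G a := by
      rw [ha']
      rcases a with ⟨f1, b1⟩
      exact flip_tl_hd G f1 b1
    have hlab : G.label a'.1 = G.label a.1 := by rw [ha']
    obtain ⟨P₁, P₂, hPsplit⟩ := List.append_of_mem hai
    obtain ⟨Q₁, Q₂, hQsplit⟩ := List.append_of_mem haj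
    set Wi' : List (Fin G.m × Bool) := P₁ ++ Q₂ with hWi'
    set Wj' : List (Fin G.m × Bool) := Q₁ ++ P₂ with hWj'
    set W2 := Function.update (Function.update W i Wi') j Wj' with hW2
    have hW2i : W2 i = Wi' := by
      rw [hW2, Function.update_of_ne hij, Function.update_self]
    have hW2j : W2 j = Wj' := by
      rw [hW2, Function.update_self]
    have hW2o : ∀ l, l ≠ i → l ≠ j → W2 l = W l := by
      intro l hli hlj
      rw [hW2, Function.update_of_ne hlj, Function.update_of_ne hli]
    have hwalki : AWalk (Rel G) {x | tl G x = u} {x | hd G x = v} Wi' :=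
      swap_walk G huv (hPsplit ▸ hW i) (hQsplit ▸ hW j) hth.1 hlab
    have hwalkj : AWalk (Rel G) {x | tl G x = u} {x | hd G x = v} Wj' :=
      swap_walk G huv (hQsplit ▸ hW j) (hPsplit ▸ hW i) hth.2.symm hlab.symm
    have hW2walk : ∀ l, AWalk (Rel G) {x | tl G x = u} {x | hd G x = v} (W2 l) := by
      intro l
      by_cases hlj : l = j
      · rw [hlj, hW2j]; exact hwalkj
      · by_cases hli : l = i
        · rw [hli, hW2i]; exact hwalki
        · rw [hW2o l hli hlj]; exact hW l
    -- subsets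
    have hsubP₁ : ∀ z ∈ P₁, z ∈ W i := by
      intro z hz; rw [hPsplit]; exact List.mem_append_left _ hz
    have hsubP₂ : ∀ z ∈ P₂, z ∈ W i := by
      intro z hz; rw [hPsplit]; exact List.mem_append_right _ (List.mem_cons_of_mem _ hz)
    have hsubQ₁ : ∀ z ∈ Q₁, z ∈ W j := by
      intro z hz; rw [hQsplit]; exact List.mem_append_left _ hz
    have hsubQ₂ : ∀ z ∈ Q₂, z ∈ W j := by
      intro z hz; rw [hQsplit]; exact List.mem_append_right _ (List.mem_cons_of_mem _ hz)
    have hnodup : ∀ l, (W l).Nodup :=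
      fun l => List.Nodup.of_map _ (nodup_fst G (hW l).1)
    have hdisP : List.Disjoint P₁ P₂ := by
      have hnd' : (P₁ ++ a :: P₂).Nodup := hPsplit ▸ hnodup i
      have := (List.nodup_append.mp hnd').2.2
      exact fun z hz hz' => this z hz z (List.mem_cons_of_mem _ hz') rfl
    have hdisQ : List.Disjoint Q₁ Q₂ := by
      have hnd' : (Q₁ ++ a' :: Q₂).Nodup := hQsplit ▸ hnodup j
      have := (List.nodup_append.mp hnd').2.2
      exact fun z hz hz' => this z hz z (List.mem_cons_of_mem _ hz') rfl
    have hW2d : ∀ l m, l ≠ m → List.Disjoint (W2 l) (W2 m) := by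
      intro l m hlm z hzl hzm
      have hchar : ∀ t (z' : Fin G.m × Bool), z' ∈ W2 t →
          (t = i ∧ (z' ∈ P₁ ∨ z' ∈ Q₂)) ∨ (t = j ∧ (z' ∈ Q₁ ∨ z' ∈ P₂)) ∨
          (t ≠ i ∧ t ≠ j ∧ z' ∈ W t) := by
        intro t z' hz'
        by_cases htj : t = j
        · rw [htj, hW2j] at hz'
          exact Or.inr (Or.inl ⟨htj, List.mem_append.mp hz'⟩)
        · by_cases hti : t = i
          · rw [hti, hW2i] at hz'
            exact Or.inl ⟨hti, List.mem_append.mp hz'⟩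
          · rw [hW2o t hti htj] at hz'
            exact Or.inr (Or.inr ⟨hti, htj, hz'⟩)
      rcases hchar l z hzl with ⟨hl, hml⟩ | ⟨hl, hml⟩ | ⟨hl1, hl2, hml⟩ <;>
        rcases hchar m z hzm with ⟨hm, hmm⟩ | ⟨hm, hmm⟩ | ⟨hm1, hm2, hmm⟩
      · exact hlm (hl.trans hm.symm)
      · -- l = i, m = j
        rcases hml with h1 | h1 <;> rcases hmm with h2 | h2
        · exact hWd i j hij (hsubP₁ z h1) (hsubQ₁ z h2)
        · exact hdisP h1 h2
        · exact hdisQ h2 h1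
        · exact hWd j i hij.symm (hsubQ₂ z h1) (hsubP₂ z h2)
      · -- l = i, m fresh
        rcases hml with h1 | h1
        · exact hWd i m (fun h => hm1 h.symm) (hsubP₁ z h1) hmm
        · exact hWd j m (fun h => hm2 h.symm) (hsubQ₂ z h1) hmm
      · -- l = j, m = i
        rcases hml with h1 | h1 <;> rcases hmm with h2 | h2
        · exact hWd j i hij.symm (hsubQ₁ z h1) (hsubP₁ z h2)
        · exact hdisQ h1 h2
        · exact hdisP h2 h1
        · exact hWd i j hij (hsubP₂ z h1) (hsubQ₂ z h2)
      · exact hlm (hl.trans hm.symm)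
      · -- l = j, m fresh
        rcases hml with h1 | h1
        · exact hWd j m (fun h => hm2 h.symm) (hsubQ₁ z h1) hmm
        · exact hWd i m (fun h => hm1 h.symm) (hsubP₂ z h1) hmm
      · -- l fresh, m = i
        rcases hmm with h2 | h2
        · exact hWd l i hl1 hml (hsubP₁ z h2)
        · exact hWd l j hl2 hml (hsubQ₂ z h2)
      · -- l fresh, m = j
        rcases hmm with h2 | h2
        · exact hWd l j hl2 hml (hsubQ₁ z h2)
        · exact hWd l i hl1 hml (hsubP₂ z h2)
      · exact hWd l m hlm hml hmm
    have hlen2 : (∑ l, (W2 l).length) + 2 = n := by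
      have hdecomp : ∀ g : Fin (k + 1) → ℕ,
          ∑ l, g l = g j + (g i + ∑ l ∈ (Finset.univ.erase j).erase i, g l) := by
        intro g
        rw [← Finset.add_sum_erase _ g (Finset.mem_univ j),
            ← Finset.add_sum_erase _ g (Finset.mem_erase.mpr ⟨hij, Finset.mem_univ i⟩)]
      have hWl : ∑ l ∈ (Finset.univ.erase j).erase i, (W2 l).length =
          ∑ l ∈ (Finset.univ.erase j).erase i, (W l).length := by
        refine Finset.sum_congr rfl ?_
        intro l hl
        rw [Finset.mem_erase, Finset.mem_erase] at hl
        rw [hW2o l hl.1 hl.2.1]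
      have e1 : ∑ l, (W2 l).length = (W2 j).length +
          ((W2 i).length + ∑ l ∈ (Finset.univ.erase j).erase i, (W2 l).length) :=
        hdecomp _
      have e2 : ∑ l, (W l).length = (W j).length +
          ((W i).length + ∑ l ∈ (Finset.univ.erase j).erase i, (W l).length) :=
        hdecomp _
      have h1 : (W i).length = P₁.length + (P₂.length + 1) := by
        rw [hPsplit]; simp
      have h2 : (W j).length = Q₁.length + (Q₂.length + 1) := by
        rw [hQsplit]; simp
      have h3 : Wi'.length = P₁.length + Q₂.length := by
        rw [hWi']; simp
      have h4 : Wj'.length = Q₁.length + P₂.length := by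
        rw [hWj']; simp
      rw [hWl, hW2i, hW2j, h3, h4] at e1
      rw [h1, h2] at e2
      rw [← hlen]
      omega
    exact ih (∑ l, (W2 l).length) (by omega) W2 rfl hW2walk hW2d

end AMx

open LabeledGraph in
/-- `G` is a `k`-fault-tolerant gossip graph iff between every ordered
pair of distinct vertices there are at least `k+1` pairwise edge-disjoint ascending
paths. -/
theorem faultTolerant_iff_edge_disjoint_ascending_paths
    {V : Type} (G : LabeledGraph V) (k : ℕ) :
    G.IsFaultTolerant k ↔
      ∀ u v : V, u ≠ v →
        ∃ P : Fin (k + 1) → List (Fin G.m),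
          (∀ i, G.IsAscPath u v (P i)) ∧
          (∀ i j, i ≠ j → List.Disjoint (P i) (P j)) := by
  classical
  constructor
  · intro hft u v huv
    set S : Set (Fin G.m × Bool) := {a | AMx.tl G a = u} with hS
    set T : Set (Fin G.m × Bool) := {a | AMx.hd G a = v} with hT
    set Rfin : Finset ((Fin G.m × Bool) × (Fin G.m × Bool)) :=
      Finset.univ.filter (fun p => AMx.Rel G p.1 p.2) with hRfin
    have hRmem : ∀ a b : Fin G.m × Bool, ((a, b) ∈ Rfin) ↔ AMx.Rel G a b := by
      intro a b; simp [hRfin]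
    have hirr : ∀ a : Fin G.m × Bool, (a, a) ∉ Rfin := by
      intro a ha
      exact absurd ((hRmem a a).mp ha).2 (lt_irrefl _)
    have H : ∀ C : Finset (Fin G.m × Bool), C.card ≤ k →
        ∃ l, AMx.AWalk (fun a b => (a, b) ∈ Rfin) S T l ∧ ∀ a ∈ l, a ∉ C := by
      intro C hC
      obtain ⟨es, hes, hav⟩ :=
        hft (C.image Prod.fst) (le_trans Finset.card_image_le hC) u v
      have hne : es ≠ [] := by
        rintro rfl
        cases hes.1
        exact huv rfl
      obtain ⟨l, hmap, hch, hhd, hlst⟩ :=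
        AMx.isWalk_to_arcwalk G hes.1 ((List.isChain_map _).mp hes.2) hne
      refine ⟨l, ⟨hch.imp (fun a b hab => (hRmem a b).mpr hab), hhd, hlst⟩, ?_⟩
      intro a hal haC
      exact hav a.1 (by rw [← hmap]; exact List.mem_map_of_mem hal)
        (Finset.mem_image_of_mem _ haC)
    obtain ⟨W, hW, hWd⟩ := AMx.menger k Rfin.card Rfin rfl hirr S T H
    have hW' : ∀ i, AMx.AWalk (AMx.Rel G) S T (W i) :=
      fun i => ⟨(hW i).1.imp (fun a b hab => (hRmem a b).mp hab), (hW i).2.1, (hW i).2.2⟩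
    exact AMx.uncross G huv k _ W rfl hW' hWd
  · intro hpaths F hF u v
    by_cases huv : u = v
    · subst huv
      exact ⟨[], ⟨LabeledGraph.IsWalk.nil u, List.isChain_nil⟩, by simp⟩
    · obtain ⟨P, hP, hPd⟩ := hpaths u v huv
      by_contra hcon
      push_neg at hcon
      have hsel : ∀ i : Fin (k + 1), ∃ e, e ∈ P i ∧ e ∈ F := by
        intro i
        obtain ⟨e, he1, he2⟩ := hcon (P i) (hP i)
        exact ⟨e, he1, he2⟩
      choose g hg1 hg2 using hsel
      have hginj : Function.Injective g := by
        intro i j hij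
        by_contra hne
        have : g i ∈ P j := by rw [hij]; exact hg1 j
        exact hPd i j hne (hg1 i) this
      have hcard : Fintype.card (Fin (k + 1)) ≤ Fintype.card {e // e ∈ F} :=
        Fintype.card_le_of_injective (fun i => (⟨g i, hg2 i⟩ : {e // e ∈ F}))
          (fun i j h => hginj (congrArg Subtype.val h))
      rw [Fintype.card_fin, Fintype.card_coe] at hcard
      omega
end

section
/- If n is a power of 2, then the Knödel graph W_{log₂ n, n} with its canonical edge labeling is a gossip graph: for every ordered pair of vertices (u,v) there is an ascending path (labels strictly increasing) from u to v. -/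
namespace KnodelAux
open LabeledGraph

def vtx (h : ℕ) (hh : 0 < h) (s : Bool) (a : ℕ) : Fin 2 × Fin h :=
  (cond s 1 0, ⟨a % h, Nat.mod_lt _ hh⟩)

def endP (h : ℕ) : Bool → ℕ → List ℕ → ℕ
  | _, a, [] => a
  | false, a, l :: L => endP h true ((a + (2 ^ l - 1)) % h) L
  | true, a, l :: L => endP h false ((a + (h - (2 ^ l - 1) % h)) % h) L

def endS : Bool → List ℕ → Bool
  | s, [] => s
  | s, _ :: L => endS (!s) L

def D : Bool → List ℕ → ℤ
  | _, [] => 0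
  | false, l :: L => ((2 : ℤ) ^ l - 1) + D true L
  | true, l :: L => -((2 : ℤ) ^ l - 1) + D false L

@[simp] lemma endS_nil (s : Bool) : endS s [] = s := by cases s <;> rfl

@[simp] lemma endP_nil (h : ℕ) (s : Bool) (a : ℕ) : endP h s a [] = a := by cases s <;> rfl

lemma vtx_mod (h : ℕ) (hh : 0 < h) (s : Bool) (a : ℕ) :
    vtx h hh s (a % h) = vtx h hh s a := by
  simp only [vtx]
  refine Prod.ext rfl (Fin.ext ?_)
  show a % h % h = a % h
  exact Nat.mod_eq_of_lt (Nat.mod_lt _ hh)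

lemma endP_lt (h : ℕ) (hh : 0 < h) :
    ∀ (L : List ℕ) (s : Bool) (a : ℕ), a < h → endP h s a L < h := by
  intro L
  induction L with
  | nil => intro s a ha; cases s <;> exact ha
  | cons l L ih =>
    intro s a ha
    cases s
    · exact ih true _ (Nat.mod_lt _ hh)
    · exact ih false _ (Nat.mod_lt _ hh)

lemma endS_parity : ∀ (L : List ℕ) (s : Bool),
    endS s L = if L.length % 2 = 0 then s else !s := by
  intro L
  induction L with
  | nil => intro s; simp [endS]
  | cons l L ih =>
    intro s
    show endS (!s) L = _
    rw [ih]
    simp only [List.length_cons]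
    by_cases h1 : L.length % 2 = 0
    · have h2 : ¬ ((L.length + 1) % 2 = 0) := by omega
      simp [h1, h2]
    · have h2 : (L.length + 1) % 2 = 0 := by omega
      simp [h1, h2]

lemma knodel_ends {m h : ℕ} (hh : 0 < h) {l : ℕ} (hl : l < m) {j : ℕ} (hj : j < h)
    (e : Fin (knodel m h).m) (he : (e : ℕ) = l * h + j) :
    (knodel m h).ends e = s(vtx h hh false j, vtx h hh true (j + (2 ^ l - 1))) := by
  have hmod : (e : ℕ) % h = j := by
    rw [he, mul_comm, Nat.mul_add_mod, Nat.mod_eq_of_lt hj]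
  have hdiv : (e : ℕ) / h = l := by
    rw [he, mul_comm, Nat.mul_add_div hh, Nat.div_eq_of_lt hj, add_zero]
  show s(((0 : Fin 2), (⟨(e : ℕ) % h, Nat.mod_lt _ hh⟩ : Fin h)),
      ((1 : Fin 2), (⟨((e : ℕ) % h + (2 ^ ((e : ℕ) / h) - 1)) % h, Nat.mod_lt _ hh⟩ : Fin h)))
    = s(vtx h hh false j, vtx h hh true (j + (2 ^ l - 1)))
  rw [Sym2.eq_iff]
  left
  refine ⟨Prod.ext rfl (Fin.ext ?_), Prod.ext rfl (Fin.ext ?_)⟩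
  · show (e : ℕ) % h = j % h
    rw [hmod, Nat.mod_eq_of_lt hj]
  · show ((e : ℕ) % h + (2 ^ ((e : ℕ) / h) - 1)) % h = (j + (2 ^ l - 1)) % h
    rw [hmod, hdiv]

lemma knodel_label {m h : ℕ} (hh : 0 < h) {l j : ℕ} (hj : j < h)
    (e : Fin (knodel m h).m) (he : (e : ℕ) = l * h + j) :
    (knodel m h).label e = l + 1 := by
  have hdiv : (e : ℕ) / h = l := by
    rw [he, mul_comm, Nat.mul_add_div hh, Nat.div_eq_of_lt hj, add_zero]
  show (e : ℕ) / h + 1 = l + 1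
  rw [hdiv]

lemma walk_exists (m h : ℕ) (hh : 0 < h) (hb : ∀ l, l < m → 2 ^ l - 1 < h) :
    ∀ (L : List ℕ) (s : Bool) (a : ℕ), a < h → (∀ l ∈ L, l < m) →
    ∃ es : List (Fin (knodel m h).m),
      (knodel m h).IsWalk (vtx h hh s a) (vtx h hh (endS s L) (endP h s a L)) es ∧
      es.map (knodel m h).label = L.map (· + 1) := by
  intro L
  induction L with
  | nil =>
    intro s a ha _
    refine ⟨[], ?_, rfl⟩
    rw [endS_nil, endP_nil]
    exact IsWalk.nil _
  | cons l L ih =>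
    intro s a ha hm
    have hl : l < m := hm l List.mem_cons_self
    have hx : 2 ^ l - 1 < h := hb l hl
    cases s
    · -- from side 0 at a : edge (l, a)
      have hbd : l * h + a < (knodel m h).m := by
        show l * h + a < m * h
        calc l * h + a < (l + 1) * h := by rw [Nat.succ_mul]; omega
        _ ≤ m * h := Nat.mul_le_mul_right _ hl
      obtain ⟨es, hw, hlab⟩ := ih true ((a + (2 ^ l - 1)) % h) (Nat.mod_lt _ hh)
        (fun l' hl' => hm l' (List.mem_cons_of_mem _ hl'))
      refine ⟨⟨l * h + a, hbd⟩ :: es, ?_, ?_⟩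
      · show (knodel m h).IsWalk (vtx h hh false a)
          (vtx h hh (endS true L) (endP h true ((a + (2 ^ l - 1)) % h) L)) _
        refine IsWalk.cons (knodel_ends hh hl ha _ rfl) ?_
        rw [← vtx_mod h hh true (a + (2 ^ l - 1))]
        exact hw
      · simp only [List.map_cons, hlab]
        rw [knodel_label (l := l) (j := a) hh ha _ rfl]
    · -- from side 1 at a : edge (l, j)
      have hj : (a + (h - (2 ^ l - 1) % h)) % h < h := Nat.mod_lt _ hh
      set j : ℕ := (a + (h - (2 ^ l - 1) % h)) % h with hjdef
      have hbd : l * h + j < (knodel m h).m := by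
        show l * h + j < m * h
        calc l * h + j < (l + 1) * h := by rw [Nat.succ_mul]; omega
        _ ≤ m * h := Nat.mul_le_mul_right _ hl
      obtain ⟨es, hw, hlab⟩ := ih false j hj
        (fun l' hl' => hm l' (List.mem_cons_of_mem _ hl'))
      have hback : (j + (2 ^ l - 1)) % h = a := by
        rw [hjdef, Nat.mod_add_mod, Nat.mod_eq_of_lt hx]
        have h3 : a + (h - (2 ^ l - 1)) + (2 ^ l - 1) = a + h := by omega
        rw [h3, Nat.add_mod_right, Nat.mod_eq_of_lt ha]
      refine ⟨⟨l * h + j, hbd⟩ :: es, ?_, ?_⟩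
      · show (knodel m h).IsWalk (vtx h hh true a)
          (vtx h hh (endS false L) (endP h false j L)) _
        have hva : vtx h hh true (j + (2 ^ l - 1)) = vtx h hh true a := by
          simp only [vtx]
          refine Prod.ext rfl (Fin.ext ?_)
          show (j + (2 ^ l - 1)) % h = a % h
          rw [hback, Nat.mod_eq_of_lt ha]
        refine IsWalk.cons ?_ hw
        rw [knodel_ends hh hl hj _ rfl, hva, Sym2.eq_swap]
      · simp only [List.map_cons, hlab]
        rw [knodel_label (l := l) (j := j) hh hj _ rfl]

def V : List ℕ → ℤ
  | [] => 0
  | l :: L => 2 ^ l - V L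

def repb (s : Bool) (k u : ℕ) : List ℕ :=
  if u = 0 then []
  else if u % 2 = 0 then repb s (k + 1) (u / 2)
  else k :: repb (!s) (k + 1) ((u + cond s 0 2) / 2)
termination_by 2 * u + cond s 0 1
decreasing_by
  · omega
  · cases s <;> simp_all <;> omega

lemma repb_V (s : Bool) (k u : ℕ) :
    V (repb s k u) = (cond s (u : ℤ) (-u)) * 2 ^ k := by
  induction s, k, u using repb.induct with
  | case1 s k =>
    simp [repb, V]
  | case2 s k u h0 he ih =>
    rw [repb, if_neg h0, if_pos he, ih]
    obtain ⟨w, rfl⟩ : ∃ w, u = 2 * w := ⟨u / 2, by omega⟩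
    rw [show 2 * w / 2 = w by omega]
    cases s <;> simp <;> push_cast <;> ring
  | case3 s k u h0 he ih =>
    rw [repb, if_neg h0, if_neg he]
    obtain ⟨w, rfl⟩ : ∃ w, u = 2 * w + 1 := ⟨u / 2, by omega⟩
    cases s
    · simp only [Bool.cond_self, cond, Bool.not_false, V,
        show (2 * w + 1 + 2) / 2 = w + 1 by omega] at ih ⊢
      rw [ih]; push_cast; ring
    · simp only [Bool.cond_self, cond, Bool.not_true, V,
        show (2 * w + 1 + 0) / 2 = w by omega] at ih ⊢
      rw [ih]; push_cast; ring

lemma repb_len (s : Bool) (k u : ℕ) :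
    (repb s k u).length % 2 = if u = 0 then 0 else cond s 1 0 := by
  induction s, k, u using repb.induct with
  | case1 s k => simp [repb]
  | case2 s k u h0 he ih =>
    rw [repb, if_neg h0, if_pos he, ih]
    have : ¬ u / 2 = 0 := by omega
    simp [this, h0]
  | case3 s k u h0 he ih =>
    rw [repb, if_neg h0, if_neg he]
    simp only [List.length_cons, if_neg h0]
    rw [Nat.add_mod, ih]
    cases s <;> simp <;> omega

lemma repb_lb (s : Bool) (k u : ℕ) : ∀ x ∈ repb s k u, k ≤ x := by
  induction s, k, u using repb.induct with
  | case1 s k => simp [repb]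
  | case2 s k u h0 he ih =>
    rw [repb, if_neg h0, if_pos he]
    exact fun x hx => le_trans (by omega) (ih x hx)
  | case3 s k u h0 he ih =>
    rw [repb, if_neg h0, if_neg he]
    intro x hx
    rcases List.mem_cons.mp hx with rfl | hx
    · rfl
    · exact le_trans (by omega) (ih x hx)

lemma repb_chain (s : Bool) (k u : ℕ) : List.Chain' (· < ·) (repb s k u) := by
  induction s, k, u using repb.induct with
  | case1 s k => simp [repb, List.Chain']
  | case2 s k u h0 he ih => rw [repb, if_neg h0, if_pos he]; exact ih
  | case3 s k u h0 he ih =>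
    rw [repb, if_neg h0, if_neg he]
    refine List.isChain_cons.mpr ⟨fun y hy => ?_, ih⟩
    have := repb_lb (!s) (k + 1) ((u + cond s 0 2) / 2) y
      (List.mem_of_mem_head? hy)
    omega

lemma repb_ub (s : Bool) (k u : ℕ) :
    ∀ x ∈ repb s k u, 2 ^ x ≤ 2 ^ k * (2 * u - cond s 1 0) := by
  induction s, k, u using repb.induct with
  | case1 s k => simp [repb]
  | case2 s k u h0 he ih =>
    rw [repb, if_neg h0, if_pos he]
    intro x hx
    refine le_trans (ih x hx) ?_
    have h2 : 2 * (2 * (u / 2) - cond s 1 0) ≤ 2 * u - cond s 1 0 := by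
      cases s <;> simp <;> omega
    calc 2 ^ (k + 1) * (2 * (u / 2) - cond s 1 0)
        = 2 ^ k * (2 * (2 * (u / 2) - cond s 1 0)) := by ring
    _ ≤ 2 ^ k * (2 * u - cond s 1 0) := Nat.mul_le_mul_left _ h2
  | case3 s k u h0 he ih =>
    rw [repb, if_neg h0, if_neg he]
    intro x hx
    rcases List.mem_cons.mp hx with rfl | hx
    · have h1 : 1 ≤ 2 * u - cond s 1 0 := by cases s <;> simp <;> omega
      calc 2 ^ x = 2 ^ x * 1 := by ring
      _ ≤ 2 ^ x * (2 * u - cond s 1 0) := Nat.mul_le_mul_left _ h1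
    · refine le_trans (ih x hx) ?_
      have h2 : 2 * (2 * ((u + cond s 0 2) / 2) - cond (!s) 1 0) ≤ 2 * u - cond s 1 0 := by
        cases s <;> simp <;> omega
      calc 2 ^ (k + 1) * (2 * ((u + cond s 0 2) / 2) - cond (!s) 1 0)
          = 2 ^ k * (2 * (2 * ((u + cond s 0 2) / 2) - cond (!s) 1 0)) := by ring
      _ ≤ 2 ^ k * (2 * u - cond s 1 0) := Nat.mul_le_mul_left _ h2


lemma endP_spec (m h : ℕ) (hh : 0 < h) (hb : ∀ l, l < m → 2 ^ l - 1 < h) :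
    ∀ (L : List ℕ) (s : Bool) (a : ℕ), a < h → (∀ l ∈ L, l < m) →
    ((endP h s a L : ℕ) : ZMod h) = (a : ZMod h) + ((D s L : ℤ) : ZMod h) := by
  intro L
  induction L with
  | nil => intro s a ha _; cases s <;> simp [D]
  | cons l L ih =>
    intro s a ha hm
    have hl : l < m := hm l List.mem_cons_self
    have hx : 2 ^ l - 1 < h := hb l hl
    have h1 : (1 : ℕ) ≤ 2 ^ l := Nat.one_le_two_pow
    have hmem := fun l' hl' => hm l' (List.mem_cons_of_mem l hl')
    cases s
    · show ((endP h true ((a + (2 ^ l - 1)) % h) L : ℕ) : ZMod h) = _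
      rw [ih true _ (Nat.mod_lt _ hh) hmem, ZMod.natCast_mod]
      have hD : D false (l :: L) = ((2 : ℤ) ^ l - 1) + D true L := rfl
      rw [hD, Nat.cast_add, Nat.cast_sub h1, Int.cast_add, Int.cast_sub]
      push_cast
      ring
    · show ((endP h false ((a + (h - (2 ^ l - 1) % h)) % h) L : ℕ) : ZMod h) = _
      rw [ih false _ (Nat.mod_lt _ hh) hmem, ZMod.natCast_mod]
      have hD : D true (l :: L) = -((2 : ℤ) ^ l - 1) + D false L := rfl
      rw [Nat.mod_eq_of_lt hx, hD, Nat.cast_add, Nat.cast_sub (le_of_lt hx),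
        Nat.cast_sub h1, ZMod.natCast_self, Int.cast_add, Int.cast_neg, Int.cast_sub]
      push_cast
      ring

lemma D_eq_V : ∀ L : List ℕ,
    D false L = V L - ((L.length % 2 : ℕ) : ℤ) ∧
    D true L = ((L.length % 2 : ℕ) : ℤ) - V L := by
  intro L
  induction L with
  | nil => simp [D, V]
  | cons l L ih =>
    obtain ⟨h1, h2⟩ := ih
    have hD1 : D false (l :: L) = ((2 : ℤ) ^ l - 1) + D true L := rfl
    have hD2 : D true (l :: L) = -((2 : ℤ) ^ l - 1) + D false L := rfl
    have hV : V (l :: L) = 2 ^ l - V L := rfl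
    have hp : (((l :: L).length % 2 : ℕ) : ℤ) = 1 - ((L.length % 2 : ℕ) : ℤ) := by
      simp only [List.length_cons]
      omega
    rw [hD1, hD2, hV, hp, h1, h2]
    constructor <;> ring

lemma exists_rep (m : ℕ) (hm : 1 ≤ m) (t : ZMod (2 ^ (m - 1))) (p : ℕ) (hp : p ≤ 1) :
    ∃ L : List ℕ, List.Chain' (· < ·) L ∧ (∀ l ∈ L, l < m) ∧ L.length % 2 = p ∧
      ((V L : ℤ) : ZMod (2 ^ (m - 1))) = t := by
  have hh : 0 < 2 ^ (m - 1) := Nat.pow_pos (by norm_num)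
  haveI : NeZero (2 ^ (m - 1)) := ⟨hh.ne'⟩
  have h2h : 2 * 2 ^ (m - 1) = 2 ^ m := by
    rw [← pow_succ']
    congr 1
    omega
  have hvt : t.val < 2 ^ (m - 1) := ZMod.val_lt t
  have hts : ((t.val : ℕ) : ZMod (2 ^ (m - 1))) = t := ZMod.natCast_zmod_val t
  have hlt : ∀ (u : ℕ) (x : ℕ), u ≠ 0 → u ≤ 2 ^ (m - 1) →
      2 ^ x ≤ 2 ^ 0 * (2 * u - cond true 1 0) → x < m := by
    intro u x hu0 hule hle
    have : 2 ^ x < 2 ^ m := by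
      simp only [pow_zero, one_mul, cond] at hle
      omega
    exact (Nat.pow_lt_pow_iff_right (by norm_num)).mp this
  have hlt' : ∀ (u : ℕ) (x : ℕ), u ≠ 0 → u < 2 ^ (m - 1) →
      2 ^ x ≤ 2 ^ 0 * (2 * u - cond false 1 0) → x < m := by
    intro u x hu0 hule hle
    have : 2 ^ x < 2 ^ m := by
      simp only [pow_zero, one_mul, cond] at hle
      omega
    exact (Nat.pow_lt_pow_iff_right (by norm_num)).mp this
  rcases Nat.le_one_iff_eq_zero_or_eq_one.mp hp with rfl | rfl
  · by_cases ht0 : t.val = 0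
    · refine ⟨[], by simp [List.Chain'], by simp, by simp, ?_⟩
      have : t = 0 := (ZMod.val_eq_zero t).mp ht0
      simp [V, this]
    · refine ⟨repb false 0 (2 ^ (m - 1) - t.val), repb_chain _ _ _, ?_, ?_, ?_⟩
      · intro x hx
        exact hlt' (2 ^ (m - 1) - t.val) x (by omega) (by omega) (repb_ub _ _ _ x hx)
      · rw [repb_len]
        split <;> rfl
      · rw [repb_V]
        simp only [cond, pow_zero, mul_one]
        rw [Int.cast_neg, Int.cast_natCast, Nat.cast_sub hvt.le, ZMod.natCast_self, hts]
        ring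
  · set u : ℕ := if t.val = 0 then 2 ^ (m - 1) else t.val with hu
    have hu0 : u ≠ 0 := by
      rw [hu]; split <;> omega
    have hule : u ≤ 2 ^ (m - 1) := by
      rw [hu]; split <;> omega
    refine ⟨repb true 0 u, repb_chain _ _ _, ?_, ?_, ?_⟩
    · intro x hx
      exact hlt u x hu0 hule (repb_ub _ _ _ x hx)
    · rw [repb_len, if_neg hu0]
      rfl
    · rw [repb_V]
      simp only [cond, pow_zero, mul_one, Int.cast_natCast]
      rw [hu]
      split
      · rename_i h0
        rw [ZMod.natCast_self]
        exact ((ZMod.val_eq_zero t).mp h0).symm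
      · exact hts


lemma reach (m : ℕ) (hm : 1 ≤ m) (hh : 0 < 2 ^ (m - 1)) (s s' : Bool) (a b : ℕ)
    (ha : a < 2 ^ (m - 1)) (hb : b < 2 ^ (m - 1)) :
    ∃ es, (knodel m (2 ^ (m - 1))).IsAscPath
      (vtx (2 ^ (m - 1)) hh s a) (vtx (2 ^ (m - 1)) hh s' b) es := by
  haveI : NeZero (2 ^ (m - 1)) := ⟨hh.ne'⟩
  have hbnd : ∀ l, l < m → 2 ^ l - 1 < 2 ^ (m - 1) := by
    intro l hl
    have h2 : 2 ^ l ≤ 2 ^ (m - 1) := Nat.pow_le_pow_right (by norm_num) (by omega)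
    have h3 : (1 : ℕ) ≤ 2 ^ l := Nat.one_le_two_pow
    omega
  have key : ∀ (t : ZMod (2 ^ (m - 1))) (p : ℕ), p ≤ 1 →
      (∀ L : List ℕ, L.length % 2 = p → ((V L : ℤ) : ZMod (2 ^ (m - 1))) = t →
        endS s L = s' ∧
        (a : ZMod (2 ^ (m - 1))) + ((D s L : ℤ) : ZMod (2 ^ (m - 1))) = (b : ZMod (2 ^ (m - 1)))) →
      ∃ es, (knodel m (2 ^ (m - 1))).IsAscPath
        (vtx (2 ^ (m - 1)) hh s a) (vtx (2 ^ (m - 1)) hh s' b) es := by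
    intro t p hp hcond
    obtain ⟨L, hch, hmem, hlen, hV⟩ := exists_rep m hm t p hp
    obtain ⟨hside, hval⟩ := hcond L hlen hV
    obtain ⟨es, hw, hlab⟩ := walk_exists m (2 ^ (m - 1)) hh hbnd L s a ha hmem
    have hcast : ((endP (2 ^ (m - 1)) s a L : ℕ) : ZMod (2 ^ (m - 1)))
        = (b : ZMod (2 ^ (m - 1))) := by
      rw [endP_spec m (2 ^ (m - 1)) hh hbnd L s a ha hmem, hval]
    have hpe : endP (2 ^ (m - 1)) s a L = b := by
      have h1 := congrArg ZMod.val hcast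
      rwa [ZMod.val_cast_of_lt (endP_lt (2 ^ (m - 1)) hh L s a ha),
        ZMod.val_cast_of_lt hb] at h1
    rw [hside, hpe] at hw
    refine ⟨es, hw, ?_⟩
    rw [hlab]
    exact (List.isChain_map _).mpr (hch.imp (fun x y hxy => by omega))
  cases s <;> cases s'
  · refine key ((b : ZMod (2 ^ (m - 1))) - a) 0 (by norm_num) ?_
    intro L hlen hV
    refine ⟨by rw [endS_parity, hlen]; simp, ?_⟩
    rw [(D_eq_V L).1, hlen]
    push_cast
    rw [hV]
    ring
  · refine key ((b : ZMod (2 ^ (m - 1))) - a + 1) 1 (le_refl 1) ?_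
    intro L hlen hV
    refine ⟨by rw [endS_parity, hlen]; simp, ?_⟩
    rw [(D_eq_V L).1, hlen]
    push_cast
    rw [hV]
    ring
  · refine key ((a : ZMod (2 ^ (m - 1))) + 1 - b) 1 (le_refl 1) ?_
    intro L hlen hV
    refine ⟨by rw [endS_parity, hlen]; simp, ?_⟩
    rw [(D_eq_V L).2, hlen]
    push_cast
    rw [hV]
    ring
  · refine key ((a : ZMod (2 ^ (m - 1))) - b) 0 (by norm_num) ?_
    intro L hlen hV
    refine ⟨by rw [endS_parity, hlen]; simp, ?_⟩
    rw [(D_eq_V L).2, hlen]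
    push_cast
    rw [hV]
    ring

end KnodelAux

open LabeledGraph KnodelAux in
/-- If `n = 2^m` is a power of 2, the Knödel graph `W_{log₂ n, n}`
(here on `2 · 2^(m-1)` vertices) is a gossip graph: every ordered pair of vertices
is joined by an ascending path. -/
theorem knodel_pow_two_gossip (m : ℕ) (hm : 1 ≤ m) :
    ∀ u v : Fin 2 × Fin (2 ^ (m - 1)),
      ∃ es : List (Fin (knodel m (2 ^ (m - 1))).m),
        (knodel m (2 ^ (m - 1))).IsAscPath u v es := by
  intro u v
  have hh : 0 < 2 ^ (m - 1) := Nat.pow_pos (by norm_num)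
  obtain ⟨us, ua⟩ := u
  obtain ⟨vs, va⟩ := v
  have hrepr : ∀ w : Fin 2, ∃ s : Bool, w = cond s 1 0 := by
    intro w
    fin_cases w
    exacts [⟨false, rfl⟩, ⟨true, rfl⟩]
  obtain ⟨s, rfl⟩ := hrepr us
  obtain ⟨s', rfl⟩ := hrepr vs
  have h1 : ((cond s 1 0 : Fin 2), ua) = vtx (2 ^ (m - 1)) hh s ua.val :=
    Prod.ext rfl (Fin.ext (Nat.mod_eq_of_lt ua.isLt).symm)
  have h2 : ((cond s' 1 0 : Fin 2), va) = vtx (2 ^ (m - 1)) hh s' va.val :=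
    Prod.ext rfl (Fin.ext (Nat.mod_eq_of_lt va.isLt).symm)
  rw [h1, h2]
  exact reach m hm hh s s' ua.val va.val ua.isLt va.isLt
end

section
/- For every even n, the edge sum W_{⌊log₂ n⌋, n} + W_{1,n} is a gossip graph: between every ordered pair of vertices there is an ascending path. -/
namespace LabeledGraph

variable {V : Type}

lemma isWalk_append {G : LabeledGraph V} {u v w : V} {es es' : List (Fin G.m)}
    (h1 : G.IsWalk u v es) (h2 : G.IsWalk v w es') : G.IsWalk u w (es ++ es') := by
  induction h1 with
  | nil _ => simpa using h2
  | cons he _ ih => exact .cons he (ih h2)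

lemma chain'_head_weaken {a b : ℕ} {l : List ℕ}
    (h : List.Chain' (· < ·) (a :: l)) (hba : b ≤ a) : List.Chain' (· < ·) (b :: l) := by
  cases l with
  | nil => simp [List.Chain']
  | cons c cs =>
    simp only [List.Chain', List.isChain_cons_cons] at h ⊢
    exact ⟨lt_of_le_of_lt hba h.1, h.2⟩

lemma chain'_append_singleton {l : List ℕ} {M : ℕ}
    (h : List.Chain' (· < ·) l) (hM : ∀ y ∈ l, y < M) :
    List.Chain' (· < ·) (l ++ [M]) := by
  induction l with
  | nil => simp [List.Chain']
  | cons a l ih =>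
    cases l with
    | nil => simpa [List.Chain'] using hM a (by simp)
    | cons b l' =>
      simp only [List.cons_append] at *
      simp only [List.Chain', List.isChain_cons_cons] at h ⊢
      exact ⟨h.1, ih h.2 fun y hy => hM y (List.mem_cons_of_mem _ hy)⟩

section KnodelGossip

/-- Abbreviation for the edge sum graph. -/
abbrev GG (Δ h : ℕ) : LabeledGraph (Fin 2 × Fin h) := (knodel Δ h).edgeSum (knodel 1 h)

def vrt {h : ℕ} (hh : 0 < h) (ε : Fin 2) (x : ℕ) : Fin 2 × Fin h :=
  (ε, ⟨x % h, Nat.mod_lt x hh⟩)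

lemma vrt_congr {h : ℕ} (hh : 0 < h) (ε : Fin 2) {x y : ℕ} (hxy : x % h = y % h) :
    vrt hh ε x = vrt hh ε y := by
  simp [vrt, hxy]

lemma vrt_self {h : ℕ} (hh : 0 < h) (ε : Fin 2) (j : Fin h) : vrt hh ε j.val = (ε, j) := by
  simp [vrt, Nat.mod_eq_of_lt j.isLt]

def eidx {Δ h : ℕ} (hh : 0 < h) (a x : ℕ) (ha : a < Δ) : Fin (GG Δ h).m :=
  ⟨a * h + x % h, by
    show a * h + x % h < Δ * h + 1 * h
    have h1 : x % h < h := Nat.mod_lt x hh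
    have h2 : (a + 1) * h ≤ Δ * h := Nat.mul_le_mul_right _ ha
    have h3 : (a + 1) * h = a * h + h := by ring
    omega⟩

lemma eidx_lt {Δ h : ℕ} (hh : 0 < h) (a x : ℕ) (ha : a < Δ) :
    a * h + x % h < Δ * h := by
  have h1 : x % h < h := Nat.mod_lt x hh
  have h2 : (a + 1) * h ≤ Δ * h := Nat.mul_le_mul_right _ ha
  have h3 : (a + 1) * h = a * h + h := by ring
  omega

lemma ends_eidx {Δ h : ℕ} (hh : 0 < h) (a x : ℕ) (ha : a < Δ) :
    (GG Δ h).ends (eidx hh a x ha) = s(vrt hh 0 x, vrt hh 1 (x + (2 ^ a - 1))) := by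
  have e1 : (a * h + x % h) % h = x % h := by
    rw [Nat.add_comm, Nat.add_mul_mod_self_right]
    exact Nat.mod_mod_of_dvd x dvd_rfl
  have e2 : (a * h + x % h) / h = a := by
    rw [Nat.mul_comm, Nat.mul_add_div hh, Nat.div_eq_of_lt (Nat.mod_lt x hh)]; omega
  rw [show (GG Δ h).ends (eidx hh a x ha) = (knodel Δ h).ends ⟨a * h + x % h, eidx_lt hh a x ha⟩
    from dif_pos (eidx_lt hh a x ha)]
  simp only [knodel]
  refine congrArg (fun p : (Fin 2 × Fin h) × (Fin 2 × Fin h) => s(p.1, p.2)) (?_ : (_, _) = (_, _))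
  simp [vrt, Prod.ext_iff, Fin.ext_iff, e1, e2, Nat.mod_add_mod]

lemma label_eidx {Δ h : ℕ} (hh : 0 < h) (a x : ℕ) (ha : a < Δ) :
    (GG Δ h).label (eidx hh a x ha) = a + 1 := by
  have e2 : (a * h + x % h) / h = a := by
    rw [Nat.mul_comm, Nat.mul_add_div hh, Nat.div_eq_of_lt (Nat.mod_lt x hh)]; omega
  rw [show (GG Δ h).label (eidx hh a x ha) = (knodel Δ h).label ⟨a * h + x % h, eidx_lt hh a x ha⟩
    from dif_pos (eidx_lt hh a x ha)]
  simp only [knodel]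
  rw [e2]

def midx {Δ h : ℕ} (hh : 0 < h) (x : ℕ) : Fin (GG Δ h).m :=
  ⟨Δ * h + x % h, by
    show Δ * h + x % h < Δ * h + 1 * h
    have h1 : x % h < h := Nat.mod_lt x hh
    omega⟩

lemma ends_midx {Δ h : ℕ} (hh : 0 < h) (x : ℕ) :
    (GG Δ h).ends (midx (Δ := Δ) hh x) = s(vrt hh 0 x, vrt hh 1 x) := by
  have hnot : ¬ (Δ * h + x % h < Δ * h) := by omega
  have e0 : Δ * h + x % h - Δ * h = x % h := by omega
  have e1 : x % h % h = x % h := Nat.mod_mod_of_dvd x dvd_rfl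
  have e2 : x % h / h = 0 := Nat.div_eq_of_lt (Nat.mod_lt x hh)
  rw [show (GG Δ h).ends (midx (Δ := Δ) hh x) = (knodel 1 h).ends ⟨Δ * h + x % h - Δ * h, (by have := Nat.mod_lt x hh; show Δ * h + x % h - Δ * h < 1 * h; omega)⟩
    from dif_neg hnot]
  simp only [knodel]
  refine congrArg (fun p : (Fin 2 × Fin h) × (Fin 2 × Fin h) => s(p.1, p.2)) (?_ : (_, _) = (_, _))
  simp [vrt, Prod.ext_iff, Fin.ext_iff, e0, e1, e2, Nat.mod_add_mod]

lemma label_midx {Δ h : ℕ} (hh : 0 < h) (x : ℕ) :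
    (GG Δ h).label (midx (Δ := Δ) hh x) = 1 + (knodel Δ h).maxLabel := by
  have hnot : ¬ (Δ * h + x % h < Δ * h) := by omega
  have e0 : Δ * h + x % h - Δ * h = x % h := by omega
  have e2 : x % h / h = 0 := Nat.div_eq_of_lt (Nat.mod_lt x hh)
  rw [show (GG Δ h).label (midx (Δ := Δ) hh x) = (knodel 1 h).label ⟨Δ * h + x % h - Δ * h, (by have := Nat.mod_lt x hh; show Δ * h + x % h - Δ * h < 1 * h; omega)⟩ + (knodel Δ h).maxLabel
    from dif_neg hnot]
  simp only [knodel]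
  rw [e0, e2]

lemma maxLabel_knodel_ge {Δ h : ℕ} (hΔ : 0 < Δ) (hh : 0 < h) :
    Δ ≤ (knodel Δ h).maxLabel := by
  have hlt : (Δ - 1) * h < (knodel Δ h).m := by
    show (Δ - 1) * h < Δ * h
    exact (Nat.mul_lt_mul_right hh).mpr (by omega)
  have hl : (knodel Δ h).label ⟨(Δ - 1) * h, hlt⟩ = Δ := by
    show (Δ - 1) * h / h + 1 = Δ
    rw [Nat.mul_div_cancel _ hh]
    omega
  calc Δ = (knodel Δ h).label ⟨(Δ - 1) * h, hlt⟩ := hl.symm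
    _ ≤ _ := Finset.le_sup (Finset.mem_univ _)


def PathA (Δ : ℕ) {h : ℕ} (hh : 0 < h) (L r x : ℕ) : Prop :=
  ∃ es : List (Fin (GG Δ h).m),
    (GG Δ h).IsWalk (vrt hh 1 x) (vrt hh 1 (x + r)) es ∧
    List.Chain' (· < ·) (L :: es.map (GG Δ h).label) ∧
    ∀ e ∈ es, (GG Δ h).label e ≤ Δ

def PathA' (Δ : ℕ) {h : ℕ} (hh : 0 < h) (L r x : ℕ) : Prop :=
  ∃ es : List (Fin (GG Δ h).m),
    (GG Δ h).IsWalk (vrt hh 0 (x + r)) (vrt hh 0 x) es ∧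
    List.Chain' (· < ·) (L :: es.map (GG Δ h).label) ∧
    ∀ e ∈ es, (GG Δ h).label e ≤ Δ

def PathB (Δ : ℕ) {h : ℕ} (hh : 0 < h) (L w x : ℕ) : Prop :=
  ∃ es : List (Fin (GG Δ h).m),
    (GG Δ h).IsWalk (vrt hh 0 x) (vrt hh 1 (x + w)) es ∧
    List.Chain' (· < ·) (L :: es.map (GG Δ h).label) ∧
    ∀ e ∈ es, (GG Δ h).label e ≤ Δ

def PathB' (Δ : ℕ) {h : ℕ} (hh : 0 < h) (L w x : ℕ) : Prop :=
  ∃ es : List (Fin (GG Δ h).m),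
    (GG Δ h).IsWalk (vrt hh 1 (x + w)) (vrt hh 0 x) es ∧
    List.Chain' (· < ·) (L :: es.map (GG Δ h).label) ∧
    ∀ e ∈ es, (GG Δ h).label e ≤ Δ

lemma quad {Δ h : ℕ} (hΔ : 0 < Δ) (hh : 0 < h) :
    ∀ μ L, Δ - 1 - L ≤ μ →
      ((∀ r x, 2 ^ L ∣ r → r < 2 ^ (Δ - 1) → PathA Δ hh L r x ∧ PathA' Δ hh L r x) ∧
       (∀ w x, 2 ^ L ∣ (w + 1) → w + 1 ≤ 2 ^ (Δ - 1) → PathB Δ hh L w x ∧ PathB' Δ hh L w x)) := by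
  have h12 : (1 : ℕ) < 2 := by norm_num
  intro μ
  induction μ with
  | zero =>
    intro L hL
    have hpow : 2 ^ (Δ - 1) ≤ 2 ^ L := Nat.pow_le_pow_right (by norm_num) (by omega)
    constructor
    · intro r x hdvd hlt
      have hr0 : r = 0 := by
        rcases Nat.eq_zero_or_pos r with h0 | h0
        · exact h0
        · have := Nat.le_of_dvd h0 hdvd; omega
      subst hr0
      constructor
      · exact ⟨[], by rw [Nat.add_zero]; exact IsWalk.nil _, by simp [List.Chain'], by simp⟩
      · exact ⟨[], by rw [Nat.add_zero]; exact IsWalk.nil _, by simp [List.Chain'], by simp⟩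
    · intro w x hdvd hle
      have h2L : 2 ^ L ≤ w + 1 := Nat.le_of_dvd (by omega) hdvd
      have hLeq : L = Δ - 1 := by
        have h3 : 2 ^ L ≤ 2 ^ (Δ - 1) := le_trans h2L hle
        have := (Nat.pow_le_pow_iff_right h12).mp h3
        omega
      have hw : w = 2 ^ L - 1 := by omega
      have hLΔ : L < Δ := by omega
      have hxw : x + w = x + (2 ^ L - 1) := by omega
      constructor
      · refine ⟨[eidx hh L x hLΔ], ?_, ?_, ?_⟩
        · rw [hxw]
          exact IsWalk.cons (ends_eidx hh L x hLΔ) (IsWalk.nil _)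
        · simp only [List.map_cons, List.map_nil, label_eidx hh L x hLΔ]
          exact List.isChain_cons_cons.mpr ⟨by omega, List.isChain_singleton _⟩
        · intro e he
          rcases List.mem_cons.mp he with rfl | hin
          · rw [label_eidx hh L x hLΔ]; omega
          · simp at hin
      · refine ⟨[eidx hh L x hLΔ], ?_, ?_, ?_⟩
        · rw [hxw]
          exact IsWalk.cons ((ends_eidx hh L x hLΔ).trans Sym2.eq_swap) (IsWalk.nil _)
        · simp only [List.map_cons, List.map_nil, label_eidx hh L x hLΔ]
          exact List.isChain_cons_cons.mpr ⟨by omega, List.isChain_singleton _⟩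
        · intro e he
          rcases List.mem_cons.mp he with rfl | hin
          · rw [label_eidx hh L x hLΔ]; omega
          · simp at hin
  | succ μ ih =>
    intro L hL
    constructor
    · -- A parts
      intro r x hdvd hlt
      rcases Nat.eq_zero_or_pos r with hr0 | hrpos
      · subst hr0
        constructor
        · exact ⟨[], by rw [Nat.add_zero]; exact IsWalk.nil _, by simp [List.Chain'], by simp⟩
        · exact ⟨[], by rw [Nat.add_zero]; exact IsWalk.nil _, by simp [List.Chain'], by simp⟩
      by_cases hdvd2 : 2 ^ (L + 1) ∣ r
      · have hlt2 : L + 1 < Δ - 1 := by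
          have h1 : 2 ^ (L + 1) ≤ r := Nat.le_of_dvd hrpos hdvd2
          exact (Nat.pow_lt_pow_iff_right h12).mp (lt_of_le_of_lt h1 hlt)
        obtain ⟨HA, HA'⟩ := (ih (L + 1) (by omega)).1 r x hdvd2 hlt
        constructor
        · obtain ⟨es, hw, hc, hb⟩ := HA
          exact ⟨es, hw, chain'_head_weaken hc (by omega), hb⟩
        · obtain ⟨es, hw, hc, hb⟩ := HA'
          exact ⟨es, hw, chain'_head_weaken hc (by omega), hb⟩
      · have h2L : 2 ^ L ≤ r := Nat.le_of_dvd hrpos hdvd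
        have hone : 1 ≤ 2 ^ L := Nat.one_le_two_pow
        have hLE : L < Δ - 1 := (Nat.pow_lt_pow_iff_right h12).mp (lt_of_le_of_lt h2L hlt)
        have hLΔ : L < Δ := by omega
        obtain ⟨m, hm⟩ := hdvd
        obtain ⟨m', hm'⟩ : ∃ m', m = 2 * m' + 1 := by
          rcases Nat.even_or_odd m with he | ho
          · exfalso
            obtain ⟨m'', hm''⟩ := he
            exact hdvd2 ⟨m'', by rw [hm, hm'', pow_succ]; ring⟩
          · obtain ⟨m'', hm''⟩ := ho; exact ⟨m'', by omega⟩
        subst hm'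
        set w := r + 2 ^ L - 1 with hwdef
        have hw1 : w + 1 = 2 ^ (L + 1) * (m' + 1) := by
          have h5 : w + 1 = r + 2 ^ L := by omega
          rw [h5, hm, pow_succ]; ring
        have hwdvd : 2 ^ (L + 1) ∣ w + 1 := ⟨m' + 1, hw1⟩
        have hwle : w + 1 ≤ 2 ^ (Δ - 1) := by
          have hsplit : 2 ^ (Δ - 1) = 2 ^ L * 2 ^ (Δ - 1 - L) := by
            rw [← pow_add]; congr 1; omega
          have hmlt : 2 * m' + 1 < 2 ^ (Δ - 1 - L) := by
            rw [hsplit, hm] at hlt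
            exact Nat.lt_of_mul_lt_mul_left hlt
          have h6 : 2 * m' + 2 ≤ 2 ^ (Δ - 1 - L) := by omega
          calc w + 1 = 2 ^ L * (2 * m' + 2) := by rw [hw1, pow_succ]; ring
            _ ≤ 2 ^ L * 2 ^ (Δ - 1 - L) := Nat.mul_le_mul_left _ h6
            _ = 2 ^ (Δ - 1) := hsplit.symm
        have hpadge : 2 ^ L - 1 ≤ 2 ^ L * h := by
          have h7 : 2 ^ L ≤ 2 ^ L * h := Nat.le_mul_of_pos_right _ hh
          omega
        constructor
        · -- PathA
          obtain ⟨es, hwalk, hchain, hbound⟩ :=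
            ((ih (L + 1) (by omega)).2 w (x + (2 ^ L * h - (2 ^ L - 1))) hwdvd hwle).1
          refine ⟨eidx hh L (x + (2 ^ L * h - (2 ^ L - 1))) hLΔ :: es, ?_, ?_, ?_⟩
          · refine IsWalk.cons (w := vrt hh 0 (x + (2 ^ L * h - (2 ^ L - 1)))) ?_ ?_
            · rw [ends_eidx hh L _ hLΔ]
              have hx : vrt hh 1 (x + (2 ^ L * h - (2 ^ L - 1)) + (2 ^ L - 1)) = vrt hh 1 x := by
                apply vrt_congr
                have h8 : x + (2 ^ L * h - (2 ^ L - 1)) + (2 ^ L - 1) = x + 2 ^ L * h := by omega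
                rw [h8, Nat.add_mul_mod_self_right]
              rw [hx]
              exact Sym2.eq_swap
            · have hend : vrt hh 1 (x + (2 ^ L * h - (2 ^ L - 1)) + w) = vrt hh 1 (x + r) := by
                apply vrt_congr
                have h9 : x + (2 ^ L * h - (2 ^ L - 1)) + w = x + r + 2 ^ L * h := by omega
                rw [h9, Nat.add_mul_mod_self_right]
              rw [← hend]
              exact hwalk
          · simp only [List.map_cons, label_eidx hh L _ hLΔ]
            exact List.isChain_cons_cons.mpr ⟨by omega, hchain⟩
          · intro e he
            rcases List.mem_cons.mp he with rfl | hin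
            · rw [label_eidx hh L _ hLΔ]; omega
            · exact hbound e hin
        · -- PathA'
          obtain ⟨es, hwalk, hchain, hbound⟩ :=
            ((ih (L + 1) (by omega)).2 w x hwdvd hwle).2
          refine ⟨eidx hh L (x + r) hLΔ :: es, ?_, ?_, ?_⟩
          · refine IsWalk.cons (ends_eidx hh L (x + r) hLΔ) ?_
            have h10 : x + r + (2 ^ L - 1) = x + w := by omega
            rw [h10]
            exact hwalk
          · simp only [List.map_cons, label_eidx hh L _ hLΔ]
            exact List.isChain_cons_cons.mpr ⟨by omega, hchain⟩
          · intro e he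
            rcases List.mem_cons.mp he with rfl | hin
            · rw [label_eidx hh L _ hLΔ]; omega
            · exact hbound e hin
    · -- B parts
      intro w x hdvd hle
      by_cases hdvd2 : 2 ^ (L + 1) ∣ (w + 1)
      · have hle2 : L + 1 ≤ Δ - 1 := by
          have h1 : 2 ^ (L + 1) ≤ w + 1 := Nat.le_of_dvd (by omega) hdvd2
          exact (Nat.pow_le_pow_iff_right h12).mp (le_trans h1 hle)
        obtain ⟨HB, HB'⟩ := (ih (L + 1) (by omega)).2 w x hdvd2 hle
        constructor
        · obtain ⟨es, hw, hc, hb⟩ := HB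
          exact ⟨es, hw, chain'_head_weaken hc (by omega), hb⟩
        · obtain ⟨es, hw, hc, hb⟩ := HB'
          exact ⟨es, hw, chain'_head_weaken hc (by omega), hb⟩
      · have h2L : 2 ^ L ≤ w + 1 := Nat.le_of_dvd (by omega) hdvd
        have hone : 1 ≤ 2 ^ L := Nat.one_le_two_pow
        have hLE : L ≤ Δ - 1 := (Nat.pow_le_pow_iff_right h12).mp (le_trans h2L hle)
        have hLΔ : L < Δ := by omega
        obtain ⟨m, hm⟩ := hdvd
        obtain ⟨m', hm'⟩ : ∃ m', m = 2 * m' + 1 := by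
          rcases Nat.even_or_odd m with he | ho
          · exfalso
            obtain ⟨m'', hm''⟩ := he
            exact hdvd2 ⟨m'', by rw [hm, hm'', pow_succ]; ring⟩
          · obtain ⟨m'', hm''⟩ := ho; exact ⟨m'', by omega⟩
        subst hm'
        set r' := w + 1 - 2 ^ L with hr'def
        have hexp1 : 2 ^ L * (2 * m' + 1) = 2 * (2 ^ L * m') + 2 ^ L := by ring
        have hexp2 : 2 ^ (L + 1) * m' = 2 * (2 ^ L * m') := by rw [pow_succ]; ring
        have hr'eq : r' = 2 ^ (L + 1) * m' := by omega
        have hr'dvd : 2 ^ (L + 1) ∣ r' := ⟨m', hr'eq⟩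
        have hr'lt : r' < 2 ^ (Δ - 1) := by omega
        constructor
        · -- PathB
          obtain ⟨es, hwalk, hchain, hbound⟩ :=
            ((ih (L + 1) (by omega)).1 r' (x + (2 ^ L - 1)) hr'dvd hr'lt).1
          refine ⟨eidx hh L x hLΔ :: es, ?_, ?_, ?_⟩
          · refine IsWalk.cons (ends_eidx hh L x hLΔ) ?_
            have h11 : x + (2 ^ L - 1) + r' = x + w := by omega
            rw [← h11]
            exact hwalk
          · simp only [List.map_cons, label_eidx hh L _ hLΔ]
            exact List.isChain_cons_cons.mpr ⟨by omega, hchain⟩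
          · intro e he
            rcases List.mem_cons.mp he with rfl | hin
            · rw [label_eidx hh L _ hLΔ]; omega
            · exact hbound e hin
        · -- PathB'
          obtain ⟨es, hwalk, hchain, hbound⟩ :=
            ((ih (L + 1) (by omega)).1 r' x hr'dvd hr'lt).2
          refine ⟨eidx hh L (x + r') hLΔ :: es, ?_, ?_, ?_⟩
          · refine IsWalk.cons ?_ hwalk
            rw [ends_eidx hh L (x + r') hLΔ]
            have h12' : x + r' + (2 ^ L - 1) = x + w := by omega
            rw [h12']
            exact Sym2.eq_swap
          · simp only [List.map_cons, label_eidx hh L _ hLΔ]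
            exact List.isChain_cons_cons.mpr ⟨by omega, hchain⟩
          · intro e he
            rcases List.mem_cons.mp he with rfl | hin
            · rw [label_eidx hh L _ hLΔ]; omega
            · exact hbound e hin


lemma asc_flip {Δ h : ℕ} (hΔ : 0 < Δ) (hh : 0 < h) {u vmid : Fin 2 × Fin h} {k : ℕ} {ε' : Fin 2}
    {es : List (Fin (GG Δ h).m)}
    (hwalk : (GG Δ h).IsWalk u vmid es)
    (hends : (GG Δ h).ends (midx (Δ := Δ) hh k) = s(vmid, vrt hh ε' k))
    (hchain : List.Chain' (· < ·) (es.map (GG Δ h).label))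
    (hbound : ∀ e ∈ es, (GG Δ h).label e ≤ Δ) :
    (GG Δ h).IsAscPath u (vrt hh ε' k) (es ++ [midx (Δ := Δ) hh k]) := by
  constructor
  · exact isWalk_append hwalk (IsWalk.cons hends (IsWalk.nil _))
  · rw [List.map_append]
    simp only [List.map_cons, List.map_nil]
    apply chain'_append_singleton hchain
    intro y hy
    obtain ⟨e, he, rfl⟩ := List.mem_map.mp hy
    have h1 := hbound e he
    have h2 : Δ + 1 ≤ (GG Δ h).label (midx (Δ := Δ) hh k) := by
      rw [label_midx hh k]
      have := maxLabel_knodel_ge (Δ := Δ) (h := h) hΔ hh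
      omega
    omega

lemma mod_shift {h : ℕ} (hh : 0 < h) (j k : Fin h) :
    (j.val + (h + k.val - j.val) % h) % h = k.val := by
  have hj := j.isLt
  have hk := k.isLt
  have h1 : (h + k.val - j.val) % h % h = (h + k.val - j.val) % h :=
    Nat.mod_mod_of_dvd _ dvd_rfl
  rw [Nat.add_mod, h1, ← Nat.add_mod]
  rw [show j.val + (h + k.val - j.val) = h + k.val from by omega]
  rw [Nat.add_mod_left]
  exact Nat.mod_eq_of_lt hk

lemma mod_shift_cases {h : ℕ} (j k : Fin h) {D : ℕ} (hD : D < h)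
    (hjD : (j.val + D) % h = k.val) : j.val + D = k.val ∨ j.val + D = h + k.val := by
  have hj := j.isLt
  have hk := k.isLt
  rcases Nat.lt_or_ge (j.val + D) h with hlt' | hge
  · left; rw [Nat.mod_eq_of_lt hlt'] at hjD; omega
  · right
    have h2 : (j.val + D) % h = j.val + D - h := by
      rw [Nat.mod_eq_sub_mod hge, Nat.mod_eq_of_lt (by omega)]
    omega

lemma exists_ascPath {Δ h : ℕ} (hΔ : 0 < Δ) (hh : 0 < h) (hhΔ : h < 2 ^ Δ)
    (u v : Fin 2 × Fin h) : ∃ es, (GG Δ h).IsAscPath u v es := by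
  obtain ⟨a, j⟩ := u
  obtain ⟨b, k⟩ := v
  have hsplit : 2 ^ Δ = 2 * 2 ^ (Δ - 1) := by
    rw [← pow_succ']; congr 1; omega
  have hone : (1 : ℕ) ≤ 2 ^ (Δ - 1) := Nat.one_le_two_pow
  have hj := j.isLt
  have hk := k.isLt
  have Q := quad hΔ hh (Δ - 1) 0 (by omega)
  fin_cases a
  · -- a = 0 : backward orientation
    set Db := (h + j.val - k.val) % h with hDb
    have hDbh : Db < h := Nat.mod_lt _ hh
    have hkD : (k.val + Db) % h = j.val := mod_shift hh k j
    by_cases hDlt : Db < 2 ^ (Δ - 1)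
    · obtain ⟨es, hwalk, hchain, hbound⟩ := (Q.1 Db k.val (one_dvd _) hDlt).2
      rw [vrt_congr hh 0 (show (k.val + Db) % h = j.val % h from by
            rw [hkD, Nat.mod_eq_of_lt hj]),
          vrt_self hh 0 j] at hwalk
      fin_cases b
      · refine ⟨es, ?_, hchain.tail⟩
        rw [vrt_self hh 0 k] at hwalk
        exact hwalk
      · have hflip := asc_flip hΔ hh hwalk (ends_midx hh k.val) hchain.tail hbound
        rw [vrt_self hh 1 k] at hflip
        exact ⟨_, hflip⟩
    · have hD0 : 0 < Db := by omega
      set w := h - Db with hw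
      have hwle : w + 1 ≤ 2 ^ (Δ - 1) := by omega
      obtain ⟨es, hwalk, hchain, hbound⟩ := (Q.2 w j.val (one_dvd _) hwle).1
      have hcase := mod_shift_cases k j hDbh hkD
      have hend : (j.val + w) % h = k.val % h := by
        rcases hcase with h3 | h3
        · rw [show j.val + w = k.val + h from by omega, Nat.add_mod_right]
        · rw [show j.val + w = k.val from by omega]
      rw [vrt_self hh 0 j, vrt_congr hh 1 hend] at hwalk
      fin_cases b
      · have hflip := asc_flip hΔ hh hwalk
          ((ends_midx hh k.val).trans Sym2.eq_swap) hchain.tail hbound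
        rw [vrt_self hh 0 k] at hflip
        exact ⟨_, hflip⟩
      · refine ⟨es, ?_, hchain.tail⟩
        rw [vrt_self hh 1 k] at hwalk
        exact hwalk
  · -- a = 1 : forward orientation
    set D := (h + k.val - j.val) % h with hD
    have hDh : D < h := Nat.mod_lt _ hh
    have hjD : (j.val + D) % h = k.val := mod_shift hh j k
    by_cases hDlt : D < 2 ^ (Δ - 1)
    · obtain ⟨es, hwalk, hchain, hbound⟩ := (Q.1 D j.val (one_dvd _) hDlt).1
      rw [vrt_self hh 1 j,
          vrt_congr hh 1 (show (j.val + D) % h = k.val % h from by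
            rw [hjD, Nat.mod_eq_of_lt hk])] at hwalk
      fin_cases b
      · have hflip := asc_flip hΔ hh hwalk
          ((ends_midx hh k.val).trans Sym2.eq_swap) hchain.tail hbound
        rw [vrt_self hh 0 k] at hflip
        exact ⟨_, hflip⟩
      · refine ⟨es, ?_, hchain.tail⟩
        rw [vrt_self hh 1 k] at hwalk
        exact hwalk
    · have hD0 : 0 < D := by omega
      set w := h - D with hw
      have hwle : w + 1 ≤ 2 ^ (Δ - 1) := by omega
      obtain ⟨es, hwalk, hchain, hbound⟩ := (Q.2 w k.val (one_dvd _) hwle).2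
      have hcase := mod_shift_cases j k hDh hjD
      have hstart : (k.val + w) % h = j.val % h := by
        rcases hcase with h3 | h3
        · rw [show k.val + w = j.val + h from by omega, Nat.add_mod_right]
        · rw [show k.val + w = j.val from by omega]
      rw [vrt_congr hh 1 hstart, vrt_self hh 1 j] at hwalk
      fin_cases b
      · refine ⟨es, ?_, hchain.tail⟩
        rw [vrt_self hh 0 k] at hwalk
        exact hwalk
      · have hflip := asc_flip hΔ hh hwalk (ends_midx hh k.val) hchain.tail hbound
        rw [vrt_self hh 1 k] at hflip
        exact ⟨_, hflip⟩

end KnodelGossip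

end LabeledGraph

open LabeledGraph in
/-- For every even `n = 2h`, the edge sum `W_{⌊log₂ n⌋,n} + W_{1,n}`
is a gossip graph: every ordered pair of vertices is joined by an ascending path. -/
theorem knodel_edgeSum_gossip (h : ℕ) (hh : 0 < h) :
    ∀ u v : Fin 2 × Fin h,
      ∃ es : List (Fin ((knodel (Nat.log 2 (2 * h)) h).edgeSum (knodel 1 h)).m),
        ((knodel (Nat.log 2 (2 * h)) h).edgeSum (knodel 1 h)).IsAscPath u v es := by
  intro u v
  have h2h : 2 ≤ 2 * h := by omega
  have hD : 0 < Nat.log 2 (2 * h) := Nat.log_pos (by norm_num) h2h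
  have hlt : h < 2 ^ Nat.log 2 (2 * h) := by
    have h1 : 2 * h < 2 ^ (Nat.log 2 (2 * h) + 1) :=
      Nat.lt_pow_succ_log_self (by norm_num) (2 * h)
    have h2 : 2 ^ (Nat.log 2 (2 * h) + 1) = 2 * 2 ^ Nat.log 2 (2 * h) := by
      rw [pow_succ']
    omega
  exact exists_ascPath hD hh hlt u v
end

section
/- In the Knödel graph W_{⌊log₂ n⌋, n} (n even), for any two vertices (α,β) and (γ,δ), an ascending path from (γ,δ) to (α,β) exists if and only if the interval R((α,β);(γ,δ)) ≤ 2^{⌊log₂ n⌋ − 1} − 1. -/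
namespace KnodelAux

open LabeledGraph

/-- Alternating sum `2^a₁ - 2^a₂ + 2^a₃ - ⋯` of a list of exponents. -/
def S : List ℕ → ℤ
  | [] => 0
  | a :: as => 2 ^ a - S as

lemma S_bd : ∀ (as : List ℕ) (N : ℕ), List.Chain' (· < ·) as → (∀ a ∈ as, a < N) →
    (as.length % 2 = 0 →
      (as = [] ∧ S as = 0) ∨
      (as ≠ [] ∧ (2:ℤ) ^ as.headI - 2 ^ (N - 1) ≤ S as ∧ S as ≤ -(2:ℤ) ^ as.headI)) ∧
    (as.length % 2 = 1 → (2:ℤ) ^ as.headI ≤ S as ∧ S as ≤ 2 ^ (N - 1)) := by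
  intro as
  induction as with
  | nil => intro N _ _; simp [S]
  | cons a as ih =>
    intro N hch hlt
    have hchas : List.Chain' (· < ·) as := hch.tail
    have hltas : ∀ b ∈ as, b < N := fun b hb => hlt b (List.mem_cons_of_mem _ hb)
    have haN : a < N := hlt a List.mem_cons_self
    have hpow : (2:ℤ) ^ a ≤ 2 ^ (N - 1) := by
      apply pow_le_pow_right₀ (by norm_num); omega
    have hapos : (0:ℤ) < 2 ^ a := by positivity
    have hlen : (a :: as).length = as.length + 1 := by simp
    obtain ⟨ihe, iho⟩ := ih N hchas hltas
    constructor
    · -- (a :: as).length even, so as odd, nonempty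
      intro hpar
      rw [hlen] at hpar
      obtain ⟨hlo, hhi⟩ := iho (by omega)
      right
      have hne : as ≠ [] := by rintro rfl; norm_num [S] at hlo
      obtain ⟨b, as', rfl⟩ := List.exists_cons_of_ne_nil hne
      have hab : a < b := (List.isChain_cons_cons.mp hch).1
      have hbpow : (2:ℤ) ^ (a+1) ≤ 2 ^ b := by
        apply pow_le_pow_right₀ (by norm_num); omega
      have h2a : (2:ℤ) ^ (a+1) = 2 * 2 ^ a := by ring
      simp only [S, List.headI] at *
      refine ⟨by simp, by linarith, by linarith⟩
    · -- (a :: as).length odd, so as even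
      intro hpar
      rw [hlen] at hpar
      rcases ihe (by omega) with ⟨rfl, hS0⟩ | ⟨hne, h1, h2⟩
      · simp only [S, List.headI, hS0]
        constructor <;> linarith
      · obtain ⟨b, as', rfl⟩ := List.exists_cons_of_ne_nil hne
        have hab : a < b := (List.isChain_cons_cons.mp hch).1
        have hbpow : (2:ℤ) ^ (a+1) ≤ 2 ^ b := by
          apply pow_le_pow_right₀ (by norm_num); omega
        have hbpos : (0:ℤ) < 2 ^ b := by positivity
        have h2a : (2:ℤ) ^ (a+1) = 2 * 2 ^ a := by ring
        simp only [S, List.headI] at *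
        constructor <;> linarith

lemma S_append (as : List ℕ) (b : ℕ) :
    S (as ++ [b]) = S as + (-1) ^ as.length * 2 ^ b := by
  induction as with
  | nil => simp [S]
  | cons a as ih => simp [S, ih, pow_succ]; ring

lemma chain'_append_singleton {as : List ℕ} {b : ℕ}
    (h1 : List.Chain' (· < ·) as) (h2 : ∀ a ∈ as, a < b) :
    List.Chain' (· < ·) (as ++ [b]) := by
  induction as with
  | nil => exact List.isChain_singleton _
  | cons a as ih =>
    rw [List.cons_append]; show List.IsChain _ _; rw [List.isChain_cons]
    refine ⟨?_, ih h1.tail (fun x hx => h2 x (List.mem_cons_of_mem _ hx))⟩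
    intro y hy
    rcases as with _ | ⟨c, as'⟩
    · simp at hy; subst hy; exact h2 a (by simp)
    · simp at hy; subst hy; exact (List.isChain_cons_cons.mp h1).1

lemma S_surj : ∀ N : ℕ,
    (∀ d : ℤ, 1 ≤ N → 1 ≤ d → d ≤ 2 ^ (N - 1) →
      ∃ as : List ℕ, List.Chain' (· < ·) as ∧ (∀ a ∈ as, a < N) ∧
        as.length % 2 = 1 ∧ S as = d) ∧
    (∀ r : ℤ, 0 ≤ r → r ≤ 2 ^ (N - 1) - 1 →
      ∃ as : List ℕ, List.Chain' (· < ·) as ∧ (∀ a ∈ as, a < N) ∧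
        as.length % 2 = 0 ∧ S as = -r) := by
  intro N
  induction N using Nat.strong_induction_on with
  | _ N ih =>
  constructor
  · -- odd part
    intro d hN hd1 hd2
    set n := d.toNat with hn
    have hdn : (n : ℤ) = d := Int.toNat_of_nonneg (by omega)
    have hn1 : 1 ≤ n := by omega
    have hnN : n ≤ 2 ^ (N - 1) := by
      have : ((2:ℤ) ^ (N-1)) = ((2 ^ (N-1) : ℕ) : ℤ) := by push_cast; ring
      omega
    set b := Nat.log 2 n with hb
    have hbl : 2 ^ b ≤ n := Nat.pow_log_le_self 2 (by omega)
    have hbu : n < 2 ^ (b + 1) := Nat.lt_pow_succ_log_self (by norm_num) n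
    by_cases hpow : n = 2 ^ b
    · refine ⟨[b], List.isChain_singleton _, ?_, by simp, ?_⟩
      · intro a ha; simp at ha; subst ha
        have : 2 ^ b ≤ 2 ^ (N - 1) := by omega
        have := (Nat.pow_le_pow_iff_right (by norm_num : 1 < 2)).mp this
        omega
      · simp [S]; rw [← hdn, hpow]; push_cast; ring
    · -- 2^b < n < 2^(b+1); take top exponent B = b+1
      have hblt : 2 ^ b < n := lt_of_le_of_ne hbl (fun h => hpow h.symm)
      set B := b + 1 with hB
      have hBN : B < N := by
        have h1 : 2 ^ b < 2 ^ (N - 1) := lt_of_lt_of_le hblt hnN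
        have := (Nat.pow_lt_pow_iff_right (by norm_num : 1 < 2)).mp h1
        omega
      have hrec := (ih B hBN).2 ((2:ℤ) ^ B - d) (by
          have : ((2:ℤ)^B) = ((2^B : ℕ) : ℤ) := by push_cast; ring
          omega)
        (by
          have h1 : ((2:ℤ)^(B-1)) = ((2^b : ℕ) : ℤ) := by
            rw [show B - 1 = b from by omega]; push_cast; ring
          have h2 : ((2:ℤ)^B) = ((2^B : ℕ) : ℤ) := by push_cast; ring
          have : 2 ^ B = 2 * 2 ^ b := by rw [hB]; ring
          omega)
      obtain ⟨as, hc, hlt, hpar, hSas⟩ := hrec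
      refine ⟨as ++ [B], chain'_append_singleton hc (fun a ha => hlt a ha), ?_, ?_, ?_⟩
      · intro a ha
        rcases List.mem_append.mp ha with h | h
        · exact lt_trans (hlt a h) hBN
        · simp at h; omega
      · simp only [List.length_append, List.length_singleton]; omega
      · have he : (-1:ℤ) ^ as.length = 1 := Even.neg_one_pow (Nat.even_iff.mpr hpar)
        rw [S_append, hSas, he]; ring
  · -- even part
    intro r hr0 hr2
    by_cases hr : r = 0
    · exact ⟨[], List.isChain_nil, by simp, by simp, by simp [S, hr]⟩
    · have hr1 : 1 ≤ r := by omega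
      set n := r.toNat with hn
      have hdn : (n : ℤ) = r := Int.toNat_of_nonneg (by omega)
      have hn1 : 1 ≤ n := by omega
      have hnN : n < 2 ^ (N - 1) := by
        have : ((2:ℤ) ^ (N-1)) = ((2 ^ (N-1) : ℕ) : ℤ) := by push_cast; ring
        omega
      set b := Nat.log 2 n with hb
      have hbl : 2 ^ b ≤ n := Nat.pow_log_le_self 2 (by omega)
      have hbu : n < 2 ^ (b + 1) := Nat.lt_pow_succ_log_self (by norm_num) n
      set B := b + 1 with hB
      have hBN : B < N := by
        have h1 : 2 ^ b < 2 ^ (N - 1) := lt_of_le_of_lt hbl hnN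
        have := (Nat.pow_lt_pow_iff_right (by norm_num : 1 < 2)).mp h1
        omega
      have hrec := (ih B hBN).1 ((2:ℤ) ^ B - r) (by omega)
        (by
          have : ((2:ℤ)^B) = ((2^B : ℕ) : ℤ) := by push_cast; ring
          omega)
        (by
          have h1 : ((2:ℤ)^(B-1)) = ((2^b : ℕ) : ℤ) := by
            rw [show B - 1 = b from by omega]; push_cast; ring
          have h2 : ((2:ℤ)^B) = ((2^B : ℕ) : ℤ) := by push_cast; ring
          have : 2 ^ B = 2 * 2 ^ b := by rw [hB]; ring
          omega)
      obtain ⟨as, hc, hlt, hpar, hSas⟩ := hrec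
      refine ⟨as ++ [B], chain'_append_singleton hc (fun a ha => hlt a ha), ?_, ?_, ?_⟩
      · intro a ha
        rcases List.mem_append.mp ha with h | h
        · exact lt_trans (hlt a h) hBN
        · simp at h; omega
      · simp only [List.length_append, List.length_singleton]; omega
      · have he : (-1:ℤ) ^ as.length = -1 := Odd.neg_one_pow (Nat.odd_iff.mpr hpar)
        rw [S_append, hSas, he]; ring

/-- Signed displacement of a path starting in vertex class `c % 2` using
exponents `as`. -/
def disp : ℕ → List ℕ → ℤ
  | _, [] => 0
  | c, a :: as => (if c % 2 = 0 then ((2:ℤ) ^ a - 1) else -((2:ℤ) ^ a - 1)) + disp (c + 1) as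

lemma disp_eq : ∀ (as : List ℕ) (c : ℕ),
    disp c as = (if c % 2 = 0 then 1 else -1) * (S as - (as.length % 2 : ℕ)) := by
  intro as
  induction as with
  | nil => intro c; simp [disp, S]
  | cons a as ih =>
    intro c
    have h1 : (c + 1) % 2 = 1 - c % 2 := by omega
    have h2 : (a :: as).length % 2 = 1 - as.length % 2 := by simp; omega
    rw [disp, ih (c + 1), h1, h2]
    have hc := Nat.mod_two_eq_zero_or_one c
    have hl := Nat.mod_two_eq_zero_or_one as.length
    rcases hc with hc | hc <;> rcases hl with hl | hl <;>
      simp [hc, hl, S] <;> ring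

lemma disp_two (as : List ℕ) : disp 2 as = disp 0 as := by
  rw [disp_eq, disp_eq]

variable {Δ h : ℕ}

lemma exp_lt (hh : 0 < h) (e : Fin (knodel Δ h).m) : e.val / h < Δ := by
  have he : e.val < Δ * h := e.isLt
  exact (Nat.div_lt_iff_lt_mul hh).mpr he

lemma knodel_ends_s9 (hh : 0 < h) (e : Fin (knodel Δ h).m) :
    (knodel Δ h).ends e =
      s( ((0 : Fin 2), (⟨e.val % h, Nat.mod_lt _ hh⟩ : Fin h)),
         ((1 : Fin 2), (⟨(e.val % h + (2 ^ (e.val / h) - 1)) % h, Nat.mod_lt _ hh⟩ : Fin h)) ) :=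
  rfl

lemma walk_alg (hh : 0 < h) : ∀ (es : List (Fin (knodel Δ h).m)) (u v : Fin 2 × Fin h),
    (knodel Δ h).IsWalk u v es →
    v.1.val = (u.1.val + es.length) % 2 ∧
    (v.2.val : ZMod h) = (u.2.val : ZMod h)
      + ((disp u.1.val (es.map (fun e => e.val / h)) : ℤ) : ZMod h) := by
  intro es
  induction es with
  | nil =>
    intro u v hw
    cases hw
    refine ⟨?_, by simp [disp]⟩
    have := u.1.isLt
    simp only [List.length_nil, Nat.add_zero]
    omega
  | cons e es ih =>
    intro u v hw
    cases hw with
    | @cons _ w _ _ _ hends hw' =>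
      rw [knodel_ends_s9 hh e, Sym2.eq_iff] at hends
      obtain ⟨hcls, hpos⟩ := ih w v hw'
      have hvlt := v.1.isLt
      have hcast2 : (((2 ^ (e.val / h) - 1 : ℕ)) : ZMod h) = (2 : ZMod h) ^ (e.val / h) - 1 := by
        rw [Nat.cast_sub Nat.one_le_two_pow]; push_cast; ring
      have hkeycast : (((e.val % h + (2 ^ (e.val / h) - 1)) % h : ℕ) : ZMod h)
          = ((e.val % h : ℕ) : ZMod h) + ((2 : ZMod h) ^ (e.val / h) - 1) := by
        rw [ZMod.natCast_mod, Nat.cast_add, hcast2]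
      rcases hends with ⟨hu, hw2⟩ | ⟨hw2, hu⟩
      · -- u in class 0
        subst hu; subst hw2
        have hcls' : v.1.val = (1 + es.length) % 2 := hcls
        have hpos' : ((v.2.val : ℕ) : ZMod h)
            = (((e.val % h + (2 ^ (e.val / h) - 1)) % h : ℕ) : ZMod h)
              + ((disp 1 (es.map fun e => e.val / h) : ℤ) : ZMod h) := hpos
        refine ⟨?_, ?_⟩
        · show v.1.val = (0 + (es.length + 1)) % 2
          omega
        · show ((v.2.val : ℕ) : ZMod h) = ((e.val % h : ℕ) : ZMod h)
            + ((disp 0 ((e :: es).map fun e => e.val / h) : ℤ) : ZMod h)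
          rw [hpos', hkeycast]
          simp only [List.map_cons, disp]
          norm_num
          push_cast
          ring
      · -- u in class 1
        subst hu; subst hw2
        have hcls' : v.1.val = (0 + es.length) % 2 := hcls
        have hpos' : ((v.2.val : ℕ) : ZMod h) = ((e.val % h : ℕ) : ZMod h)
              + ((disp 0 (es.map fun e => e.val / h) : ℤ) : ZMod h) := hpos
        refine ⟨?_, ?_⟩
        · show v.1.val = (1 + (es.length + 1)) % 2
          omega
        · show ((v.2.val : ℕ) : ZMod h)
            = (((e.val % h + (2 ^ (e.val / h) - 1)) % h : ℕ) : ZMod h)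
              + ((disp 1 ((e :: es).map fun e => e.val / h) : ℤ) : ZMod h)
          rw [hpos', hkeycast]
          simp only [List.map_cons, disp]
          norm_num [disp_two]
          push_cast
          ring

lemma build_walk (hh : 0 < h) : ∀ (as : List ℕ) (u : Fin 2 × Fin h), (∀ a ∈ as, a < Δ) →
    ∃ (es : List (Fin (knodel Δ h).m)) (v : Fin 2 × Fin h),
      (knodel Δ h).IsWalk u v es ∧ es.map (knodel Δ h).label = as.map (· + 1) ∧
      es.map (fun e => e.val / h) = as := by
  intro as
  induction as with
  | nil => intro u _; exact ⟨[], u, IsWalk.nil u, by simp, by simp⟩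
  | cons a as ih =>
    intro u hlt
    obtain ⟨c, p⟩ := u
    have haΔ : a < Δ := hlt a List.mem_cons_self
    have hmul : (a + 1) * h ≤ Δ * h := Nat.mul_le_mul_right _ (by omega)
    have hmul' : (a + 1) * h = a * h + h := by ring
    fin_cases c
    · -- class 0 at position p
      set e : Fin (knodel Δ h).m := ⟨a * h + p.val, by
        show a * h + p.val < Δ * h
        have := p.isLt; omega⟩ with he
      have hediv : e.val / h = a := by
        show (a * h + p.val) / h = a
        rw [Nat.mul_comm, Nat.mul_add_div hh, Nat.div_eq_of_lt p.isLt]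
        omega
      have hemod : e.val % h = p.val := by
        show (a * h + p.val) % h = p.val
        rw [Nat.mul_comm, Nat.mul_add_mod, Nat.mod_eq_of_lt p.isLt]
      set w : Fin 2 × Fin h := ((1 : Fin 2), ⟨(p.val + (2 ^ a - 1)) % h, Nat.mod_lt _ hh⟩) with hw
      have hends : (knodel Δ h).ends e = s(((0 : Fin 2), p), w) := by
        rw [knodel_ends_s9 hh e, Sym2.eq_iff]
        left
        constructor
        · exact Prod.ext rfl (Fin.ext hemod)
        · exact Prod.ext rfl (Fin.ext (by rw [hemod, hediv]))
      obtain ⟨es, v, hwalk, hmap, hexp⟩ := ih w (fun b hb => hlt b (List.mem_cons_of_mem _ hb))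
      refine ⟨e :: es, v, IsWalk.cons hends hwalk, ?_, ?_⟩
      · simp only [List.map_cons, hmap]
        congr 1
        show e.val / h + 1 = a + 1
        rw [hediv]
      · simp only [List.map_cons, hexp, hediv]
    · -- class 1 at position p
      set x := 2 ^ a - 1 with hx
      set j := (p.val + (h - x % h)) % h with hj
      have hjlt : j < h := Nat.mod_lt _ hh
      set e : Fin (knodel Δ h).m := ⟨a * h + j, by
        show a * h + j < Δ * h
        omega⟩ with he
      have hediv : e.val / h = a := by
        show (a * h + j) / h = a
        rw [Nat.mul_comm, Nat.mul_add_div hh, Nat.div_eq_of_lt hjlt]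
        omega
      have hemod : e.val % h = j := by
        show (a * h + j) % h = j
        rw [Nat.mul_comm, Nat.mul_add_mod, Nat.mod_eq_of_lt hjlt]
      have hkey : (j + x) % h = p.val := by
        have hxm : x % h < h := Nat.mod_lt _ hh
        obtain ⟨q, hq⟩ : ∃ q, x = h * q + x % h := ⟨x / h, (Nat.div_add_mod x h).symm⟩
        have h1 : (j + x) % h = (p.val + (h - x % h) + x) % h := by
          rw [hj, Nat.mod_add_mod]
        have hmm : h * (q + 1) = h * q + h := by ring
        have h2 : p.val + (h - x % h) + x = p.val + h * (q + 1) := by omega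
        rw [h1, h2, Nat.add_mul_mod_self_left]
        exact Nat.mod_eq_of_lt p.isLt
      set w : Fin 2 × Fin h := ((0 : Fin 2), ⟨j, hjlt⟩) with hw
      have hends : (knodel Δ h).ends e = s(((1 : Fin 2), p), w) := by
        rw [knodel_ends_s9 hh e, Sym2.eq_iff]
        right
        constructor
        · exact Prod.ext rfl (Fin.ext hemod)
        · exact Prod.ext rfl (Fin.ext (by rw [hemod, hediv]; rw [← hx]; exact hkey))
      obtain ⟨es, v, hwalk, hmap, hexp⟩ := ih w (fun b hb => hlt b (List.mem_cons_of_mem _ hb))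
      refine ⟨e :: es, v, IsWalk.cons hends hwalk, ?_, ?_⟩
      · simp only [List.map_cons, hmap]
        congr 1
        show e.val / h + 1 = a + 1
        rw [hediv]
      · simp only [List.map_cons, hexp, hediv]

lemma interval_lt (hh : 0 < h) (α : Fin 2) (β δ : Fin h) :
    knodelInterval h α β.val δ.val < h := by
  have hb := β.isLt; have hd := δ.isLt
  unfold knodelInterval
  split_ifs <;> omega

lemma interval_cast (hh : 0 < h) (α : Fin 2) (β δ : Fin h) :
    ((knodelInterval h α β.val δ.val : ℕ) : ZMod h) =
      if α = 0 then ((δ.val : ZMod h) - (β.val : ZMod h))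
      else ((β.val : ZMod h) - (δ.val : ZMod h)) := by
  have hb := β.isLt; have hd := δ.isLt
  have hcast : ((h : ℕ) : ZMod h) = 0 := ZMod.natCast_self h
  unfold knodelInterval
  split_ifs with h1 h2 h3
  · rw [Nat.cast_sub h2]
  · rw [Nat.cast_sub (by omega : β.val - δ.val ≤ h), Nat.cast_sub (by omega : δ.val ≤ β.val),
      hcast]
    ring
  · rw [Nat.cast_sub h3]
  · rw [Nat.cast_sub (by omega : δ.val - β.val ≤ h), Nat.cast_sub (by omega : β.val ≤ δ.val),
      hcast]
    ring

lemma cast_inj_of_lt (hh : 0 < h) {K : ℕ} {r : ℤ} (hK : K < h) (hr0 : 0 ≤ r) (hrh : r < h)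
    (hc : (K : ZMod h) = ((r : ℤ) : ZMod h)) : (K : ℤ) = r := by
  haveI : NeZero h := ⟨hh.ne'⟩
  have h1 : ((r.toNat : ℕ) : ZMod h) = ((r : ℤ) : ZMod h) := by
    have h0 : ((r.toNat : ℤ) : ZMod h) = ((r : ℤ) : ZMod h) := by rw [Int.toNat_of_nonneg hr0]
    rw [← h0]; push_cast; ring
  have h2 : (K : ZMod h) = ((r.toNat : ℕ) : ZMod h) := by rw [h1, hc]
  have h3 := congrArg ZMod.val h2
  rw [ZMod.val_cast_of_lt hK, ZMod.val_cast_of_lt (show r.toNat < h by omega)] at h3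
  omega

end KnodelAux

open LabeledGraph in
/-- In `W_{⌊log₂ n⌋,n}` (`n = 2h` even), an ascending path from
`(γ,δ)` to `(α,β)` exists iff `R((α,β);(γ,δ)) ≤ 2^{⌊log₂ n⌋−1} − 1`. -/
theorem knodel_asc_path_iff_interval (h : ℕ) (hh : 0 < h)
    (α γ : Fin 2) (β δ : Fin h) :
    (∃ es : List (Fin (knodel (Nat.log 2 (2 * h)) h).m),
        (knodel (Nat.log 2 (2 * h)) h).IsAscPath (γ, δ) (α, β) es)
      ↔ knodelInterval h α β.val δ.val ≤ 2 ^ (Nat.log 2 (2 * h) - 1) - 1 := by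
  classical
  haveI : NeZero h := ⟨hh.ne'⟩
  set Δ := Nat.log 2 (2 * h) with hΔdef
  have hΔ1 : 1 ≤ Δ := Nat.log_pos (by norm_num) (by omega)
  have h2Δ : 2 ^ Δ ≤ 2 * h := Nat.pow_log_le_self 2 (by omega)
  have hpowh : 2 ^ (Δ - 1) ≤ h := by
    have he : 2 ^ Δ = 2 * 2 ^ (Δ - 1) := by
      rw [← pow_succ']
      congr 1
      omega
    omega
  have hpow1 : 1 ≤ 2 ^ (Δ - 1) := Nat.one_le_two_pow
  have hc2 : ((2 ^ (Δ - 1) : ℕ) : ℤ) = (2:ℤ) ^ (Δ - 1) := by push_cast; ring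
  have hKlt : knodelInterval h α β.val δ.val < h := KnodelAux.interval_lt hh α β δ
  have hKcast := KnodelAux.interval_cast hh α β δ
  have hγ2 := γ.isLt
  have hα2 := α.isLt
  constructor
  · rintro ⟨es, hwalk, hchain⟩
    obtain ⟨hcls, hpos⟩ := KnodelAux.walk_alg hh es (γ, δ) (α, β) hwalk
    have hcls' : α.val = (γ.val + es.length) % 2 := hcls
    have hpos' : ((β.val : ℕ) : ZMod h) = ((δ.val : ℕ) : ZMod h)
        + ((KnodelAux.disp γ.val (es.map (fun e => e.val / h)) : ℤ) : ZMod h) := hpos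
    set as : List ℕ := es.map (fun e => e.val / h) with hasdef
    have hlen : as.length = es.length := by rw [hasdef]; simp
    have hchas : List.Chain' (· < ·) as := by
      have hlab : es.map (knodel Δ h).label = as.map (· + 1) := by
        rw [hasdef, List.map_map]; rfl
      rw [hlab] at hchain; unfold List.Chain' at hchain; rw [List.isChain_map] at hchain
      exact List.IsChain.imp (fun a b hab => by omega) hchain
    have hltas : ∀ a ∈ as, a < Δ := by
      intro a ha
      rw [hasdef] at ha
      simp only [List.mem_map] at ha
      obtain ⟨e, _, rfl⟩ := ha
      exact KnodelAux.exp_lt hh e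
    obtain ⟨hbde, hbdo⟩ := KnodelAux.S_bd as Δ hchas hltas
    have hhead : (0:ℤ) < 2 ^ as.headI := by positivity
    have hd := KnodelAux.disp_eq as γ.val
    have hrbounds : 0 ≤ (if as.length % 2 = 0 then -KnodelAux.S as else KnodelAux.S as - 1)
        ∧ (if as.length % 2 = 0 then -KnodelAux.S as else KnodelAux.S as - 1)
          ≤ (2:ℤ) ^ (Δ - 1) - 1 := by
      rcases Nat.mod_two_eq_zero_or_one as.length with hp | hp
      · rw [if_pos hp]
        rcases hbde hp with ⟨-, hS0⟩ | ⟨-, hb1, hb2⟩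
        · rw [hS0]
          refine ⟨by norm_num, ?_⟩
          simp only [neg_zero]
          omega
        · constructor <;> linarith
      · rw [if_neg (by omega)]
        obtain ⟨hb1, hb2⟩ := hbdo hp
        constructor <;> linarith
    have hrc : ((knodelInterval h α β.val δ.val : ℕ) : ZMod h)
        = (((if as.length % 2 = 0 then -KnodelAux.S as else KnodelAux.S as - 1) : ℤ) : ZMod h) := by
      rw [hKcast]
      rcases Nat.mod_two_eq_zero_or_one as.length with hp | hp <;>
        rcases (show γ.val = 0 ∨ γ.val = 1 by omega) with hγ | hγ
      · -- even, γ = 0, α = 0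
        have hα : α = 0 := by apply Fin.ext; show α.val = 0; omega
        have hdisp : KnodelAux.disp γ.val as = KnodelAux.S as := by
          rw [hd, hγ, hp]; norm_num
        rw [if_pos hα, if_pos hp, hpos', hdisp]
        push_cast
        ring
      · -- even, γ = 1, α = 1
        have hα : α ≠ 0 := by
          intro hc
          have : α.val = 0 := by rw [hc]; rfl
          omega
        have hdisp : KnodelAux.disp γ.val as = -KnodelAux.S as := by
          rw [hd, hγ, hp]; norm_num
        rw [if_neg hα, if_pos hp, hpos', hdisp]
        push_cast
        ring
      · -- odd, γ = 0, α = 1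
        have hα : α ≠ 0 := by
          intro hc
          have : α.val = 0 := by rw [hc]; rfl
          omega
        have hdisp : KnodelAux.disp γ.val as = KnodelAux.S as - 1 := by
          rw [hd, hγ, hp]; norm_num
        rw [if_neg hα, if_neg (by omega), hpos', hdisp]
        push_cast
        ring
      · -- odd, γ = 1, α = 0
        have hα : α = 0 := by apply Fin.ext; show α.val = 0; omega
        have hdisp : KnodelAux.disp γ.val as = -(KnodelAux.S as - 1) := by
          rw [hd, hγ, hp]; norm_num
        rw [if_pos hα, if_neg (by omega), hpos', hdisp]
        push_cast
        ring
    obtain ⟨hr0, hr1⟩ := hrbounds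
    have hrh : (if as.length % 2 = 0 then -KnodelAux.S as else KnodelAux.S as - 1) < (h:ℤ) := by
      omega
    have hKr := KnodelAux.cast_inj_of_lt hh hKlt hr0 hrh hrc
    omega
  · intro hKle
    set K := knodelInterval h α β.val δ.val with hKdef
    have hKleZ : ((K : ℕ) : ℤ) ≤ 2 ^ (Δ - 1) - 1 := by omega
    by_cases hαγ : α = γ
    · -- even-length exponent list
      obtain ⟨as, hch, hlt, hpar, hS⟩ :=
        (KnodelAux.S_surj Δ).2 ((K : ℕ) : ℤ) (Int.natCast_nonneg K) hKleZ
      obtain ⟨es, v, hwalk, hlab, hexp⟩ := KnodelAux.build_walk hh as (γ, δ) hlt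
      obtain ⟨hcls, hpos⟩ := KnodelAux.walk_alg hh es (γ, δ) v hwalk
      have hcls' : v.1.val = (γ.val + es.length) % 2 := hcls
      have hlen : es.length = as.length := by
        have := congrArg List.length hexp; simpa using this
      have hααγ : α.val = γ.val := by rw [hαγ]
      have hdisp : KnodelAux.disp γ.val as = (if α = 0 then -((K : ℕ) : ℤ) else ((K : ℕ) : ℤ)) := by
        rw [KnodelAux.disp_eq, hpar, hS]
        rcases (show γ.val = 0 ∨ γ.val = 1 by omega) with hγ | hγ
        · have hα : α = 0 := by apply Fin.ext; show α.val = 0; omega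
          rw [if_pos hα, hγ]; norm_num
        · have hα : α ≠ 0 := by
            intro hc
            have : α.val = 0 := by rw [hc]; rfl
            omega
          rw [if_neg hα, hγ]; norm_num
      have hv1 : v.1 = α := by apply Fin.ext; omega
      have hβcast : ((β.val : ℕ) : ZMod h) = ((δ.val : ℕ) : ZMod h)
          + ((KnodelAux.disp γ.val as : ℤ) : ZMod h) := by
        rw [hdisp]
        by_cases hα0 : α = 0
        · rw [if_pos hα0]
          rw [if_pos hα0] at hKcast
          push_cast
          push_cast at hKcast
          linear_combination hKcast
        · rw [if_neg hα0]
          rw [if_neg hα0] at hKcast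
          push_cast
          push_cast at hKcast
          linear_combination -hKcast
      have hv2 : v.2 = β := by
        apply Fin.ext
        have hpos' : ((v.2.val : ℕ) : ZMod h) = ((δ.val : ℕ) : ZMod h)
            + ((KnodelAux.disp γ.val as : ℤ) : ZMod h) := by
          rw [hexp] at hpos
          exact hpos
        have hvb := hpos'.trans hβcast.symm
        have hval := congrArg ZMod.val hvb
        rwa [ZMod.val_cast_of_lt v.2.isLt, ZMod.val_cast_of_lt β.isLt] at hval
      refine ⟨es, ?_, ?_⟩
      · have hveq : v = (α, β) := Prod.ext hv1 hv2
        rwa [hveq] at hwalk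
      · rw [hlab]
        exact List.isChain_map_of_isChain _ (fun a b hab => by omega) hch
    · -- odd-length exponent list
      obtain ⟨as, hch, hlt, hpar, hS⟩ :=
        (KnodelAux.S_surj Δ).1 (((K : ℕ) : ℤ) + 1) hΔ1 (by omega) (by omega)
      obtain ⟨es, v, hwalk, hlab, hexp⟩ := KnodelAux.build_walk hh as (γ, δ) hlt
      obtain ⟨hcls, hpos⟩ := KnodelAux.walk_alg hh es (γ, δ) v hwalk
      have hcls' : v.1.val = (γ.val + es.length) % 2 := hcls
      have hlen : es.length = as.length := by
        have := congrArg List.length hexp; simpa using this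
      have hne : α.val ≠ γ.val := fun hc => hαγ (Fin.ext hc)
      have hdisp : KnodelAux.disp γ.val as = (if α = 0 then -((K : ℕ) : ℤ) else ((K : ℕ) : ℤ)) := by
        rw [KnodelAux.disp_eq, hpar, hS]
        rcases (show γ.val = 0 ∨ γ.val = 1 by omega) with hγ | hγ
        · have hα : α ≠ 0 := by
            intro hc
            have : α.val = 0 := by rw [hc]; rfl
            omega
          rw [if_neg hα, hγ]
          norm_num
        · have hα : α = 0 := by apply Fin.ext; show α.val = 0; omega
          rw [if_pos hα, hγ]
          norm_num
      have hv1 : v.1 = α := by apply Fin.ext; have := v.1.isLt; omega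
      have hβcast : ((β.val : ℕ) : ZMod h) = ((δ.val : ℕ) : ZMod h)
          + ((KnodelAux.disp γ.val as : ℤ) : ZMod h) := by
        rw [hdisp]
        by_cases hα0 : α = 0
        · rw [if_pos hα0]
          rw [if_pos hα0] at hKcast
          push_cast
          push_cast at hKcast
          linear_combination hKcast
        · rw [if_neg hα0]
          rw [if_neg hα0] at hKcast
          push_cast
          push_cast at hKcast
          linear_combination -hKcast
      have hv2 : v.2 = β := by
        apply Fin.ext
        have hpos' : ((v.2.val : ℕ) : ZMod h) = ((δ.val : ℕ) : ZMod h)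
            + ((KnodelAux.disp γ.val as : ℤ) : ZMod h) := by
          rw [hexp] at hpos
          exact hpos
        have hvb := hpos'.trans hβcast.symm
        have hval := congrArg ZMod.val hvb
        rwa [ZMod.val_cast_of_lt v.2.isLt, ZMod.val_cast_of_lt β.isLt] at hval
      refine ⟨es, ?_, ?_⟩
      · have hveq : v = (α, β) := Prod.ext hv1 hv2
        rwa [hveq] at hwalk
      · rw [hlab]
        exact List.isChain_map_of_isChain _ (fun a b hab => by omega) hch
end
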